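/- arXiv:1308.6813 — 6 statements merged into one kernel-verified Lean document; each statement's English description precedes it below -/
import Mathlib

section
/- The number of receding stacks with summits of size n equals the number of integer partitions of n. Here a receding stack with summit of size n is a sequence a_1 ≤ a_2 ≤ ... ≤ a_r ≤ c ≥ b_s ≥ ... ≥ b_1 of positive integers summing to n, satisfying a_j ≥ a_{j+1} - 1 for all 1 ≤ j ≤ r-1 and b_j ≤ b_{j+1} + 1 for all 1 ≤ j ≤ s-1, together with a choice of one occurrence of the maximum value c (a marked summit). -/
/-- The size of a stack, given as a triple `(a, c, b)`: the increasing run `a`,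
the marked summit `c`, and the decreasing run `b` (listed from the summit outward). -/
def stackSize (s : List ℕ × ℕ × List ℕ) : ℕ := s.1.sum + s.2.1 + s.2.2.sum

/-- A receding stack with summit: `a₁ ≤ ... ≤ a_r ≤ c ≥ b_s ≥ ... ≥ b₁`, all parts
positive and at most `c`, and every part size from `1` to `c-1` appears among the
`a`'s and among the `b`'s (equivalently, the difference conditions `aⱼ ≥ a_{j+1} - 1`
and `bⱼ ≤ b_{j+1} + 1`).  The marked summit is the component `c`. -/
def IsRecedingStackWithSummit (s : List ℕ × ℕ × List ℕ) : Prop :=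
  s.1.Chain' (· ≤ ·) ∧ s.2.2.Chain' (· ≥ ·) ∧
  (∀ x ∈ s.1, 1 ≤ x ∧ x ≤ s.2.1) ∧ (∀ x ∈ s.2.2, 1 ≤ x ∧ x ≤ s.2.1) ∧
  (∀ k, 1 ≤ k → k < s.2.1 → k ∈ s.1) ∧ (∀ k, 1 ≤ k → k < s.2.1 → k ∈ s.2.2)

/-! ### Rank counting functions -/

/-- number of `t < M` with `u t > i` -/
def nrank (u : ℕ → ℕ) (M i : ℕ) : ℕ := ((Finset.range M).filter (fun t => i < u t)).card

lemma nrank_le (u : ℕ → ℕ) (M i : ℕ) : nrank u M i ≤ M := by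
  calc ((Finset.range M).filter (fun t => i < u t)).card ≤ (Finset.range M).card :=
        Finset.card_filter_le _ _
    _ = M := Finset.card_range M

lemma nrank_anti (u : ℕ → ℕ) (M : ℕ) {i j : ℕ} (h : i ≤ j) : nrank u M j ≤ nrank u M i := by
  apply Finset.card_le_card
  intro t ht
  simp only [Finset.mem_filter] at *
  exact ⟨ht.1, lt_of_le_of_lt h ht.2⟩

lemma nrank_congr {u u' : ℕ → ℕ} (M i : ℕ) (h : ∀ t < M, u t = u' t) :
    nrank u M i = nrank u' M i := by
  unfold nrank
  congr 1
  apply Finset.filter_congr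
  intro t ht
  rw [h t (Finset.mem_range.1 ht)]

lemma lt_nrank_iff {u : ℕ → ℕ} (hu : Antitone u) {M k i : ℕ} (hk : k < M) :
    k < nrank u M i ↔ i < u k := by
  constructor
  · intro h
    simp only [nrank] at h
    by_contra hc
    push_neg at hc
    have hsub : (Finset.range M).filter (fun t => i < u t) ⊆ Finset.range k := by
      intro t ht
      simp only [Finset.mem_filter, Finset.mem_range] at *
      by_contra htk
      push_neg at htk
      exact absurd (lt_of_lt_of_le ht.2 (le_trans (hu htk) hc)) (lt_irrefl i)
    have := Finset.card_le_card hsub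
    rw [Finset.card_range] at this
    omega
  · intro h
    simp only [nrank]
    have hsub : Finset.range (k+1) ⊆ (Finset.range M).filter (fun t => i < u t) := by
      intro t ht
      simp only [Finset.mem_filter, Finset.mem_range] at *
      exact ⟨lt_of_lt_of_le ht hk, lt_of_lt_of_le h (hu (by omega))⟩
    have := Finset.card_le_card hsub
    rw [Finset.card_range] at this
    exact lt_of_lt_of_le (Nat.lt_succ_self k) this

lemma nrank_nrank {u : ℕ → ℕ} (hu : Antitone u) {M M' t : ℕ} (ht : t < M') (hb : u t ≤ M) :
    nrank (fun i => nrank u M' i) M t = u t := by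
  simp only [nrank]
  have : ((Finset.range M).filter
      (fun i => t < ((Finset.range M').filter (fun s => i < u s)).card)) = Finset.range (u t) := by
    ext i
    simp only [Finset.mem_filter, Finset.mem_range]
    have := lt_nrank_iff hu (M := M') (k := t) (i := i) ht
    simp only [nrank] at this
    rw [this]
    omega
  exact (congrArg Finset.card this).trans (Finset.card_range _)

lemma nrank_zero_of_ge {u : ℕ → ℕ} {M n t : ℕ} (h : ∀ i, u i ≤ n) (ht : n ≤ t) :
    nrank u M t = 0 := by
  unfold nrank
  rw [Finset.card_eq_zero, Finset.filter_eq_empty_iff]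
  intro i _
  have := h i
  omega

/-! ### Counting parts of multisets -/

/-- number of parts of `m` that are `≥ k` -/
def npge (m : Multiset ℕ) (k : ℕ) : ℕ := Multiset.countP (fun x => k ≤ x) m

lemma npge_add (s t : Multiset ℕ) (k : ℕ) : npge (s + t) k = npge s k + npge t k :=
  Multiset.countP_add _ s t

lemma npge_anti (m : Multiset ℕ) {k k' : ℕ} (h : k ≤ k') : npge m k' ≤ npge m k := by
  induction m using Multiset.induction with
  | empty => simp [npge]
  | cons a s ih =>
    simp only [npge, Multiset.countP_cons] at *
    split_ifs <;> omega

lemma npge_count (m : Multiset ℕ) (v : ℕ) : npge m v = m.count v + npge m (v+1) := by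
  induction m using Multiset.induction with
  | empty => simp [npge]
  | cons a s ih =>
    simp only [npge, Multiset.countP_cons, Multiset.count_cons] at *
    split_ifs <;> omega

lemma npge_zero_of_gt (m : Multiset ℕ) {k : ℕ} (h : ∀ x ∈ m, x < k) : npge m k = 0 := by
  simp only [npge, Multiset.countP_eq_card_filter]
  rw [Multiset.filter_eq_nil.2 (fun x hx => by have := h x hx; omega)]
  rfl

/-! ### The `b`-type multisets given by multiplicity vectors -/

lemma mem_bparts (c : ℕ) (h : ℕ → ℕ) {x : ℕ}
    (hx : x ∈ ∑ i ∈ Finset.range c, Multiset.replicate (h i) (i+1)) :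
    1 ≤ x ∧ x ≤ c := by
  obtain ⟨i, hi, hmem⟩ := Multiset.mem_sum.1 hx
  rw [Multiset.eq_of_mem_replicate hmem]
  simp only [Finset.mem_range] at hi
  omega

lemma count_bparts (c : ℕ) (h : ℕ → ℕ) {i : ℕ} (hi : i < c) :
    (∑ j ∈ Finset.range c, Multiset.replicate (h j) (j+1)).count (i+1) = h i := by
  rw [Multiset.count_sum']
  rw [Finset.sum_eq_single i]
  · rw [Multiset.count_replicate, if_pos rfl]
  · intro j _ hj
    rw [Multiset.count_replicate, if_neg (by omega)]
  · intro hmem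
    exact absurd (Finset.mem_range.2 hi) hmem

lemma count_bparts_out (c : ℕ) (h : ℕ → ℕ) {v : ℕ} (hv : v = 0 ∨ c < v) :
    (∑ j ∈ Finset.range c, Multiset.replicate (h j) (j+1)).count v = 0 := by
  rw [Multiset.count_sum']
  apply Finset.sum_eq_zero
  intro j hj
  simp only [Finset.mem_range] at hj
  rw [Multiset.count_replicate, if_neg (by omega)]

lemma npge_bparts_high (c : ℕ) (h : ℕ → ℕ) {k : ℕ} (hk : c < k) :
    npge (∑ j ∈ Finset.range c, Multiset.replicate (h j) (j+1)) k = 0 :=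
  npge_zero_of_gt _ (fun x hx => lt_of_le_of_lt (mem_bparts c h hx).2 hk)

lemma sum_bparts (c : ℕ) (h : ℕ → ℕ) :
    (∑ i ∈ Finset.range c, Multiset.replicate (h i) (i+1)).sum
      = ∑ i ∈ Finset.range c, (i+1) * h i := by
  rw [Multiset.sum_sum]
  apply Finset.sum_congr rfl
  intro i _
  rw [Multiset.sum_replicate, smul_eq_mul, mul_comm]

/-! ### Rows from a multiplicity vector -/

def frow (c : ℕ) (g : ℕ → ℕ) (i : ℕ) : ℕ := ∑ j ∈ Finset.Ico i c, g j

def rawParts (c : ℕ) (g h : ℕ → ℕ) : Multiset ℕ :=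
  (Multiset.range c).map (fun i => c + frow c g i) +
    ∑ i ∈ Finset.range c, Multiset.replicate (h i) (i+1)

lemma frow_anti (c : ℕ) (g : ℕ → ℕ) : Antitone (frow c g) := by
  intro i j hij
  exact Finset.sum_le_sum_of_subset (Finset.Ico_subset_Ico hij le_rfl)

lemma frow_succ (c : ℕ) (g : ℕ → ℕ) {i : ℕ} (h : i < c) :
    frow c g i = g i + frow c g (i+1) := Finset.sum_eq_sum_Ico_succ_bot h g

lemma frow_of_le (c : ℕ) (g : ℕ → ℕ) {i : ℕ} (h : c ≤ i) : frow c g i = 0 := by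
  simp [frow, Finset.Ico_eq_empty_of_le h]

lemma sum_frow (c : ℕ) (g : ℕ → ℕ) :
    ∑ i ∈ Finset.range c, frow c g i = ∑ j ∈ Finset.range c, (j+1) * g j := by
  have h1 : ∀ i, frow c g i = ∑ j ∈ Finset.range c, if i ≤ j then g j else 0 := by
    intro i
    rw [frow, ← Finset.sum_filter]
    congr 1
    ext j
    simp only [Finset.mem_Ico, Finset.mem_filter, Finset.mem_range]
    omega
  simp only [h1]
  rw [Finset.sum_comm]
  apply Finset.sum_congr rfl
  intro j hj
  simp only [Finset.mem_range] at hj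
  rw [← Finset.sum_filter]
  have : (Finset.range c).filter (fun i => i ≤ j) = Finset.range (j+1) := by
    ext i; simp only [Finset.mem_filter, Finset.mem_range]; omega
  rw [this, Finset.sum_const, Finset.card_range, smul_eq_mul, mul_comm]

lemma frow_le (c : ℕ) (g : ℕ → ℕ) (i : ℕ) :
    frow c g i ≤ ∑ j ∈ Finset.range c, (j+1) * g j := by
  calc frow c g i ≤ frow c g 0 := frow_anti c g (Nat.zero_le i)
    _ = ∑ j ∈ Finset.range c, g j := by
        rw [frow]; congr 1; ext j; simp [Finset.mem_Ico, Finset.mem_range]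
    _ ≤ ∑ j ∈ Finset.range c, (j+1) * g j :=
        Finset.sum_le_sum (fun j _ => by nlinarith [Nat.zero_le (j * g j)])

lemma rawParts_sum (c : ℕ) (g h : ℕ → ℕ) :
    (rawParts c g h).sum
      = c*c + (∑ i ∈ Finset.range c, (i+1) * g i) + ∑ i ∈ Finset.range c, (i+1) * h i := by
  unfold rawParts
  rw [Multiset.sum_add]
  have h1 : (Multiset.map (fun i => c + frow c g i) (Multiset.range c)).sum
      = ∑ i ∈ Finset.range c, (c + frow c g i) := rfl
  rw [h1, sum_bparts, Finset.sum_add_distrib, Finset.sum_const, Finset.card_range,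
    smul_eq_mul, sum_frow]

lemma rawParts_pos (c : ℕ) (g h : ℕ → ℕ) : ∀ x ∈ rawParts c g h, 0 < x := by
  intro x hx
  rw [rawParts, Multiset.mem_add] at hx
  rcases hx with hx | hx
  · obtain ⟨i, hi, rfl⟩ := Multiset.mem_map.1 hx
    rw [Multiset.mem_range] at hi
    omega
  · exact (mem_bparts c h hx).1

lemma npge_rows (c : ℕ) (g : ℕ → ℕ) (t : ℕ) :
    npge ((Multiset.range c).map (fun i => c + frow c g i)) (c+1+t) = nrank (frow c g) c t := by
  rw [npge, Multiset.countP_map, nrank]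
  have : Multiset.filter (fun a => c+1+t ≤ c + frow c g a) (Multiset.range c)
      = Multiset.filter (fun a => t < frow c g a) (Multiset.range c) :=
    Multiset.filter_congr (fun x _ => by constructor <;> intro <;> omega)
  rw [this]
  rfl

lemma npge_rows_c (c : ℕ) (g : ℕ → ℕ) :
    npge ((Multiset.range c).map (fun i => c + frow c g i)) c = c := by
  rw [npge, Multiset.countP_map]
  have : Multiset.filter (fun a => c ≤ c + frow c g a) (Multiset.range c) = Multiset.range c := by
    rw [Multiset.filter_eq_self]
    intro a _; omega
  rw [this, Multiset.card_range]

lemma count_rows_c (c : ℕ) (g : ℕ → ℕ) :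
    ((Multiset.range c).map (fun i => c + frow c g i)).count c + nrank (frow c g) c 0 = c := by
  classical
  rw [Multiset.count_map, nrank]
  have h2 : ((Finset.range c).filter (fun t => 0 < frow c g t)).card
      = Multiset.card (Multiset.filter (fun t => 0 < frow c g t) (Multiset.range c)) := rfl
  rw [h2]
  have h3 : Multiset.filter (fun a => c = c + frow c g a) (Multiset.range c)
      = Multiset.filter (fun a => ¬ (0 < frow c g a)) (Multiset.range c) :=
    Multiset.filter_congr (fun x _ => by constructor <;> intro <;> omega)
  rw [h3]
  have h4 := congrArg Multiset.card
    (Multiset.filter_add_not (fun a => 0 < frow c g a) (Multiset.range c))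
  rw [Multiset.card_add, Multiset.card_range] at h4
  omega

lemma count_rows_low (c : ℕ) (g : ℕ → ℕ) {v : ℕ} (hv : v < c) :
    ((Multiset.range c).map (fun i => c + frow c g i)).count v = 0 := by
  rw [Multiset.count_map]
  have : Multiset.filter (fun a => v = c + frow c g a) (Multiset.range c) = 0 := by
    rw [Multiset.filter_eq_nil]
    intro a _; omega
  rw [this]
  rfl

lemma count_rows_high (c : ℕ) (g : ℕ → ℕ) (t : ℕ) :
    ((Multiset.range c).map (fun i => c + frow c g i)).count (c+1+t) + nrank (frow c g) c (t+1)
      = nrank (frow c g) c t := by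
  classical
  rw [Multiset.count_map, nrank, nrank]
  have e1 : ((Finset.range c).filter (fun s => t+1 < frow c g s)).card
      = Multiset.card (Multiset.filter (fun s => t+1 < frow c g s) (Multiset.range c)) := rfl
  have e2 : ((Finset.range c).filter (fun s => t < frow c g s)).card
      = Multiset.card (Multiset.filter (fun s => t < frow c g s) (Multiset.range c)) := rfl
  rw [e1, e2]
  have h3 : Multiset.filter (fun a => c+1+t = c + frow c g a) (Multiset.range c)
      = Multiset.filter (fun a => frow c g a = t + 1) (Multiset.range c) :=
    Multiset.filter_congr (fun x _ => by constructor <;> intro <;> omega)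
  rw [h3]
  have h4 : Multiset.filter (fun s => frow c g s = t+1) (Multiset.range c)
        + Multiset.filter (fun s => t+1 < frow c g s) (Multiset.range c)
      = Multiset.filter (fun s => t < frow c g s) (Multiset.range c) := by
    rw [Multiset.filter_add_filter]
    have hz : Multiset.filter (fun a => frow c g a = t + 1 ∧ t + 1 < frow c g a)
        (Multiset.range c) = 0 := by
      rw [Multiset.filter_eq_nil]; intro a _; omega
    rw [hz, add_zero]
    exact Multiset.filter_congr (fun x _ => by constructor <;> intro <;> omega)
  rw [← h4, Multiset.card_add]

/-! ### Gauss-type sums -/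

lemma two_gauss (c : ℕ) : 2 * (∑ i ∈ Finset.range c, i) + c = c * c := by
  induction c with
  | zero => simp
  | succ d ih =>
    rw [Finset.sum_range_succ]
    have : (d+1)*(d+1) = d*d + 2*d + 1 := by ring
    omega

lemma sum_ite_lt (c : ℕ) :
    ∑ i ∈ Finset.range c, (i+1) * (if i+1 < c then 1 else 0) = ∑ i ∈ Finset.range c, i := by
  cases c with
  | zero => simp
  | succ d =>
    rw [Finset.sum_range_succ, if_neg (by omega), Finset.sum_range_succ (f := fun i => (i : ℕ))]
    simp only [mul_zero, add_zero]
    have hc : ∀ x ∈ Finset.range d, (x+1) * (if x+1 < d+1 then 1 else 0) = x + 1 := by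
      intro x hx; simp only [Finset.mem_range] at hx; rw [if_pos (by omega), mul_one]
    rw [Finset.sum_congr rfl hc, Finset.sum_add_distrib, Finset.sum_const, Finset.card_range,
      smul_eq_mul, mul_one]
/-! ### The middle type: Durfee-square data -/

def MidT (n : ℕ) :=
  {x : ℕ × (ℕ → ℕ) × (ℕ → ℕ) //
    (∀ i, x.1 ≤ i → x.2.1 i = 0) ∧ (∀ i, x.1 ≤ i → x.2.2 i = 0) ∧
    x.1 * x.1 + (∑ i ∈ Finset.range x.1, (i+1) * x.2.1 i)
      + (∑ i ∈ Finset.range x.1, (i+1) * x.2.2 i) = n}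

/-- The Durfee number of a multiset of parts. -/
def dRec (n : ℕ) (m : Multiset ℕ) : ℕ := Nat.findGreatest (fun k => k ≤ npge m k) n

def fRec (n : ℕ) (m : Multiset ℕ) (i : ℕ) : ℕ :=
  nrank (fun t => npge m (dRec n m + 1 + t)) n i

def gRec (n : ℕ) (m : Multiset ℕ) (i : ℕ) : ℕ :=
  if i < dRec n m then fRec n m i - fRec n m (i+1) else 0

def hRec (n : ℕ) (m : Multiset ℕ) (i : ℕ) : ℕ :=
  if i + 1 < dRec n m then m.count (i+1)
  else if i + 1 = dRec n m then m.count (dRec n m) - (dRec n m - npge m (dRec n m + 1))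
  else 0

lemma recon (n : ℕ) (m : Multiset ℕ) (hpos : ∀ x ∈ m, 0 < x) (hsum : m.sum = n) :
    rawParts (dRec n m) (gRec n m) (hRec n m) = m := by
  classical
  set c := dRec n m with hcdef
  set u : ℕ → ℕ := fun t => npge m (c + 1 + t) with hudef
  have hxle : ∀ x ∈ m, x ≤ n := fun x hx => hsum ▸ Multiset.le_sum_of_mem hx
  have hcle : c ≤ n := Nat.findGreatest_le n
  have hNc : c ≤ npge m c :=
    Nat.findGreatest_spec (P := fun k => k ≤ npge m k) (Nat.zero_le n) (Nat.zero_le _)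
  have hNc1 : npge m (c+1) ≤ c := by
    by_cases h : c + 1 ≤ n
    · have := Nat.findGreatest_is_greatest (show dRec n m < c + 1 by omega) h
      simp only [not_le] at this
      omega
    · have : npge m (c+1) = 0 := npge_zero_of_gt m (fun x hx => by have := hxle x hx; omega)
      omega
  have hu_anti : Antitone u := fun s t hst => npge_anti m (by omega)
  have hu0 : ∀ t, u t ≤ c := fun t => le_trans (npge_anti m (by omega)) hNc1
  have hun : ∀ t, n ≤ t → u t = 0 := fun t ht =>
    npge_zero_of_gt m (fun x hx => by have := hxle x hx; omega)
  have hF : ∀ i, fRec n m i = nrank u n i := fun i => rfl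
  have hF_le : ∀ i, fRec n m i ≤ n := fun i => nrank_le u n i
  have hFc : ∀ i, c ≤ i → fRec n m i = 0 := fun i hi => nrank_zero_of_ge hu0 hi
  have hFanti : ∀ i j, i ≤ j → fRec n m j ≤ fRec n m i := fun i j hij => nrank_anti u n hij
  -- the reconstructed rows agree with `fRec`
  have step : ∀ d i, i + d = c → frow c (gRec n m) i = fRec n m i := by
    intro d
    induction d with
    | zero =>
      intro i hi
      rw [frow_of_le c _ (by omega), hFc i (by omega)]
    | succ d ih =>
      intro i hi
      have hic : i < c := by omega
      rw [frow_succ c _ hic, ih (i+1) (by omega)]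
      have h1 : gRec n m i = fRec n m i - fRec n m (i+1) := by
        simp only [gRec]
        rw [if_pos hic]
      have h2 := hFanti i (i+1) (by omega)
      omega
  have key1 : ∀ i, frow c (gRec n m) i = fRec n m i := by
    intro i
    by_cases hic : i ≤ c
    · exact step (c - i) i (by omega)
    · rw [frow_of_le c _ (by omega), hFc i (by omega)]
  have key2 : ∀ t, nrank (frow c (gRec n m)) c t = u t := by
    intro t
    rw [nrank_congr c t (fun s _ => key1 s)]
    by_cases htn : t < n
    · exact nrank_nrank hu_anti htn (hu0 t)
    · rw [hun t (by omega), nrank_zero_of_ge hF_le (by omega)]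
  -- now compare counts
  rw [Multiset.ext]
  intro v
  rw [rawParts, Multiset.count_add]
  rcases Nat.eq_zero_or_pos v with rfl | hv
  · have hrows : ((Multiset.range c).map (fun i => c + frow c (gRec n m) i)).count 0 = 0 := by
      rcases Nat.eq_zero_or_pos c with hc0 | hc
      · rw [hc0]; simp
      · exact count_rows_low c _ hc
    rw [hrows, count_bparts_out c _ (Or.inl rfl)]
    symm
    rw [Multiset.count_eq_zero]
    intro h0
    exact absurd (hpos 0 h0) (lt_irrefl 0)
  · rcases lt_trichotomy v c with hvc | rfl | hvc
    · have hv1 : v - 1 + 1 = v := by omega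
      have hbp := count_bparts c (hRec n m) (show v - 1 < c by omega)
      rw [hv1] at hbp
      have hval : hRec n m (v-1) = m.count v := by
        simp only [hRec, ← hcdef]
        rw [if_pos (show v - 1 + 1 < c by omega), hv1]
      rw [count_rows_low c _ hvc, hbp, hval, zero_add]
    · -- v = c
      have hc : 0 < c := hv
      have hrc := count_rows_c c (gRec n m)
      have hk0 := key2 0
      have hnpc := npge_count m c
      have hbp := count_bparts c (hRec n m) (show c - 1 < c by omega)
      rw [show c - 1 + 1 = c from by omega] at hbp
      have hval : hRec n m (c-1) = m.count c - (c - npge m (c+1)) := by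
        simp only [hRec, ← hcdef]
        rw [if_neg (show ¬ (c - 1 + 1 < c) by omega), if_pos (show c - 1 + 1 = c by omega)]
      have hu00 : u 0 = npge m (c+1) := by
        show npge m (c+1+0) = npge m (c+1)
        norm_num
      rw [hbp, hval]
      omega
    · -- v > c
      have hvt : c + 1 + (v - c - 1) = v := by omega
      have h5 := count_rows_high c (gRec n m) (v - c - 1)
      rw [hvt] at h5
      have hk1 := key2 (v - c - 1)
      have hk2 := key2 (v - c - 1 + 1)
      have hu1 : u (v - c - 1) = npge m v := by
        show npge m (c + 1 + (v - c - 1)) = npge m v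
        rw [show c + 1 + (v - c - 1) = v from by omega]
      have hu2 : u (v - c - 1 + 1) = npge m (v+1) := by
        show npge m (c + 1 + (v - c - 1 + 1)) = npge m (v+1)
        rw [show c + 1 + (v - c - 1 + 1) = v + 1 from by omega]
      have hnpc := npge_count m v
      rw [count_bparts_out c _ (Or.inr hvc)]
      omega

/-- From Durfee data to a partition. -/
def midToPartition (n : ℕ) (x : MidT n) : Nat.Partition n where
  parts := rawParts x.1.1 x.1.2.1 x.1.2.2
  parts_pos := fun {i} hi => rawParts_pos _ _ _ i hi
  parts_sum := by rw [rawParts_sum]; exact x.2.2.2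

def partitionToMid (n : ℕ) (p : Nat.Partition n) : MidT n := by
  refine ⟨(dRec n p.parts, gRec n p.parts, hRec n p.parts), ?_, ?_, ?_⟩
  · intro i hi
    simp only [gRec]
    rw [if_neg (by omega)]
  · intro i hi
    simp only [hRec]
    rw [if_neg (by omega), if_neg (by omega)]
  · have hr := recon n p.parts (fun x hx => p.parts_pos hx) p.parts_sum
    have hs := rawParts_sum (dRec n p.parts) (gRec n p.parts) (hRec n p.parts)
    rw [hr, p.parts_sum] at hs
    exact hs.symm

lemma mid_left_inv (n : ℕ) (x : MidT n) : partitionToMid n (midToPartition n x) = x := by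
  classical
  obtain ⟨⟨c, g, h⟩, hz1, hz2, hs⟩ := x
  dsimp only at hz1 hz2 hs
  apply Subtype.ext
  simp only [partitionToMid, midToPartition]
  set m := rawParts c g h with hmdef
  have hrows_bp : m = (Multiset.range c).map (fun i => c + frow c g i) +
      ∑ i ∈ Finset.range c, Multiset.replicate (h i) (i+1) := rfl
  have hnp : ∀ k, npge m k
      = npge ((Multiset.range c).map (fun i => c + frow c g i)) k
        + npge (∑ i ∈ Finset.range c, Multiset.replicate (h i) (i+1)) k := by
    intro k
    rw [hrows_bp, npge_add]
  have hgsum_le : (∑ i ∈ Finset.range c, (i+1) * g i) ≤ n := by omega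
  have hnpc1 : npge m (c+1) ≤ c := by
    have h1 : npge ((Multiset.range c).map (fun i => c + frow c g i)) (c+1)
        = nrank (frow c g) c 0 := by
      have := npge_rows c g 0
      simpa using this
    have := nrank_le (frow c g) c 0
    rw [hnp (c+1), h1, npge_bparts_high c h (by omega)]
    omega
  -- (a) the Durfee number is recovered
  have hc : dRec n m = c := by
    rw [dRec, Nat.findGreatest_eq_iff]
    refine ⟨?_, ?_, ?_⟩
    · have hcc : c ≤ c * c := by
        cases c with
        | zero => exact le_rfl
        | succ d => exact Nat.le_mul_of_pos_left _ (Nat.succ_pos d)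
      omega
    · intro _
      rw [hnp c, npge_rows_c c g]
      omega
    · intro k hk hkn
      simp only [not_le]
      have := npge_anti m (show c + 1 ≤ k by omega)
      omega
  -- rows agree with fRec
  have hu_eq : ∀ t, npge m (dRec n m + 1 + t) = nrank (frow c g) c t := by
    intro t
    rw [hc, hnp (c+1+t), npge_rows c g t, npge_bparts_high c h (by omega), add_zero]
  have hfr : ∀ i, i < c → fRec n m i = frow c g i := by
    intro i hi
    rw [fRec, nrank_congr n i (fun t _ => hu_eq t)]
    exact nrank_nrank (frow_anti c g) hi (le_trans (frow_le c g i) hgsum_le)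
  have hfrc : fRec n m c = 0 := by
    rw [fRec, nrank_congr n c (fun t _ => hu_eq t)]
    exact nrank_zero_of_ge (fun t => nrank_le (frow c g) c t) le_rfl
  refine Prod.ext hc (Prod.ext ?_ ?_)
  · -- g is recovered
    funext i
    show gRec n m i = g i
    by_cases hic : i < c
    · have h1 : gRec n m i = fRec n m i - fRec n m (i+1) := by
        simp only [gRec]
        rw [if_pos (by omega)]
      rcases Nat.lt_or_ge (i+1) c with hic1 | hic1
      · rw [h1, hfr i hic, hfr (i+1) hic1, frow_succ c g hic]
        omega
      · have hic1' : i + 1 = c := by omega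
        rw [h1, hfr i hic, hic1', hfrc, frow_succ c g hic, frow_of_le c g (by omega)]
        omega
    · simp only [gRec]
      rw [if_neg (by omega), hz1 i (by omega)]
  · -- h is recovered
    funext i
    show hRec n m i = h i
    by_cases h1 : i + 1 < c
    · simp only [hRec]
      rw [hc, if_pos h1]
      rw [hrows_bp, Multiset.count_add, count_rows_low c g (by omega), count_bparts c h (by omega),
        zero_add]
    · by_cases h2 : i + 1 = c
      · simp only [hRec]
        rw [hc, if_neg (by omega), if_pos h2]
        have hcc := count_rows_c c g
        have hcount0 := count_bparts c h (show i < c by omega)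
        rw [h2] at hcount0
        have hcount : m.count c = ((Multiset.range c).map (fun i => c + frow c g i)).count c
            + h i := by
          rw [hrows_bp, Multiset.count_add, hcount0]
        have hnpc1' : npge m (c+1) = nrank (frow c g) c 0 := by
          have := hu_eq 0
          rw [hc] at this
          simpa using this
        omega
      · simp only [hRec]
        rw [hc, if_neg h1, if_neg h2, hz2 i (by omega)]

lemma mid_right_inv (n : ℕ) (p : Nat.Partition n) : midToPartition n (partitionToMid n p) = p := by
  apply Nat.Partition.ext
  exact recon n p.parts (fun x hx => p.parts_pos hx) p.parts_sum

def midEquivPartition (n : ℕ) : MidT n ≃ Nat.Partition n where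
  toFun := midToPartition n
  invFun := partitionToMid n
  left_inv := mid_left_inv n
  right_inv := mid_right_inv n
/-! ### The stack side -/

lemma sum_single_ite (c x : ℕ) (h1 : 1 ≤ x) (h2 : x ≤ c) :
    ∑ i ∈ Finset.range c, (i+1) * (if x = i+1 then 1 else 0) = x := by
  rw [Finset.sum_eq_single (x-1)]
  · rw [if_pos (by omega)]
    omega
  · intro j _ hj
    rw [if_neg (by omega), mul_zero]
  · intro hx
    exact absurd (Finset.mem_range.2 (by omega)) hx

lemma list_sum_counts (c : ℕ) (l : List ℕ) (hl : ∀ x ∈ l, 1 ≤ x ∧ x ≤ c) :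
    l.sum = ∑ i ∈ Finset.range c, (i+1) * l.count (i+1) := by
  induction l with
  | nil => simp
  | cons x t ih =>
    have hx := hl x (by simp)
    have ht : ∀ y ∈ t, 1 ≤ y ∧ y ≤ c := fun y hy => hl y (by simp [hy])
    have hcnt : ∀ i : ℕ, (x :: t).count (i+1) = t.count (i+1) + (if x = i+1 then 1 else 0) := by
      intro i
      simp [List.count_cons, beq_iff_eq]
    simp only [List.sum_cons, hcnt, ih ht]
    rw [Finset.sum_congr rfl
      (fun i _ => (Nat.mul_add (i+1) (t.count (i+1)) _ : (i+1) * _ = _)),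
      Finset.sum_add_distrib, sum_single_ite c x hx.1 hx.2]
    omega

/-- Multiplicity vector of the list `l`, with the compulsory staircase removed. -/
def gOf (c : ℕ) (l : List ℕ) (i : ℕ) : ℕ :=
  if i + 1 < c then l.count (i+1) - 1 else if i + 1 = c then l.count c else 0

lemma count_eq_gOf (c : ℕ) (l : List ℕ) (hall : ∀ k, 1 ≤ k → k < c → k ∈ l)
    {i : ℕ} (hi : i < c) :
    l.count (i+1) = gOf c l i + (if i+1 < c then 1 else 0) := by
  unfold gOf
  by_cases h : i + 1 < c
  · rw [if_pos h, if_pos h]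
    have : 0 < l.count (i+1) := List.count_pos_iff.2 (hall (i+1) (by omega) h)
    omega
  · have h2 : i + 1 = c := by omega
    rw [if_neg h, if_neg h, if_pos h2, ← h2, add_zero]

lemma sum_gOf (c : ℕ) (l : List ℕ) (hl : ∀ x ∈ l, 1 ≤ x ∧ x ≤ c)
    (hall : ∀ k, 1 ≤ k → k < c → k ∈ l) :
    (∑ i ∈ Finset.range c, (i+1) * gOf c l i) + (∑ i ∈ Finset.range c, i) = l.sum := by
  rw [list_sum_counts c l hl, ← sum_ite_lt c, ← Finset.sum_add_distrib]
  apply Finset.sum_congr rfl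
  intro i hi
  rw [count_eq_gOf c l hall (Finset.mem_range.1 hi), Nat.mul_add]

/-- The multiset with multiplicities `g` plus a staircase. -/
def mOf (c : ℕ) (g : ℕ → ℕ) : Multiset ℕ :=
  ∑ i ∈ Finset.range c, Multiset.replicate (g i + if i+1 < c then 1 else 0) (i+1)

lemma mOf_sum (c : ℕ) (g : ℕ → ℕ) :
    (mOf c g).sum = (∑ i ∈ Finset.range c, (i+1) * g i) + ∑ i ∈ Finset.range c, i := by
  rw [mOf, sum_bparts, ← sum_ite_lt c, ← Finset.sum_add_distrib]
  apply Finset.sum_congr rfl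
  intro i _
  rw [Nat.mul_add]

lemma mOf_eq_coe (c : ℕ) (l : List ℕ) (hl : ∀ x ∈ l, 1 ≤ x ∧ x ≤ c)
    (hall : ∀ k, 1 ≤ k → k < c → k ∈ l) :
    mOf c (gOf c l) = (↑l : Multiset ℕ) := by
  classical
  rw [Multiset.ext]
  intro v
  rw [Multiset.coe_count]
  rcases Nat.eq_zero_or_pos v with rfl | hv
  · rw [mOf, count_bparts_out c _ (Or.inl rfl)]
    symm
    rw [List.count_eq_zero]
    intro h0
    exact absurd (hl 0 h0).1 (by omega)
  · rcases le_or_gt v c with hvc | hvc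
    · have h9 : v - 1 + 1 = v := by omega
      have hcb := count_bparts c (fun i => gOf c l i + if i+1 < c then 1 else 0)
        (show v - 1 < c by omega)
      rw [h9] at hcb
      rw [mOf, hcb]
      have hce := count_eq_gOf c l hall (show v - 1 < c by omega)
      rw [h9] at hce
      rw [← hce]
    · rw [mOf, count_bparts_out c _ (Or.inr hvc)]
      symm
      rw [List.count_eq_zero]
      intro h0
      exact absurd (hl v h0).2 (by omega)

lemma mem_mOf (c : ℕ) (g : ℕ → ℕ) {x : ℕ} (hx : x ∈ mOf c g) : 1 ≤ x ∧ x ≤ c :=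
  mem_bparts c _ hx

lemma mem_mOf_of_lt (c : ℕ) (g : ℕ → ℕ) {k : ℕ} (h1 : 1 ≤ k) (h2 : k < c) : k ∈ mOf c g := by
  rw [← Multiset.count_pos]
  have h9 : k - 1 + 1 = k := by omega
  have hcb := count_bparts c (fun i => g i + if i+1 < c then 1 else 0) (show k - 1 < c by omega)
  rw [h9] at hcb
  rw [mOf, hcb, if_pos h2]
  omega

/-- The stack subtype. -/
def StackT (n : ℕ) := {s : List ℕ × ℕ × List ℕ // IsRecedingStackWithSummit s ∧ stackSize s = n}

def stackToMid (n : ℕ) (s : StackT n) : MidT n := by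
  refine ⟨(s.1.2.1, gOf s.1.2.1 s.1.1, gOf s.1.2.1 s.1.2.2), ?_, ?_, ?_⟩
  · intro i hi
    dsimp only at hi ⊢
    simp only [gOf]
    rw [if_neg (by omega), if_neg (by omega)]
  · intro i hi
    dsimp only at hi ⊢
    simp only [gOf]
    rw [if_neg (by omega), if_neg (by omega)]
  · dsimp only
    obtain ⟨⟨hca, hcb, hba, hbb, haa, hab⟩, hsz⟩ := s.2
    have h1 := sum_gOf s.1.2.1 s.1.1 hba haa
    have h2 := sum_gOf s.1.2.1 s.1.2.2 hbb hab
    rw [stackSize] at hsz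
    rw [← two_gauss s.1.2.1]
    omega

def midToStack (n : ℕ) (x : MidT n) : StackT n := by
  refine ⟨(Multiset.sort (mOf x.1.1 x.1.2.1) (· ≤ ·), x.1.1,
    (Multiset.sort (mOf x.1.1 x.1.2.2) (· ≤ ·)).reverse), ⟨?_, ?_, ?_, ?_, ?_, ?_⟩, ?_⟩
  · exact List.isChain_iff_pairwise.2 (Multiset.pairwise_sort _ _)
  · have hsb : List.Chain' (· ≤ ·) (Multiset.sort (mOf x.1.1 x.1.2.2) (· ≤ ·)) :=
      List.isChain_iff_pairwise.2 (Multiset.pairwise_sort _ _)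
    exact List.isChain_reverse.2 hsb
  · intro y hy
    exact mem_mOf _ _ ((Multiset.mem_sort _).1 hy)
  · intro y hy
    rw [List.mem_reverse] at hy
    exact mem_mOf _ _ ((Multiset.mem_sort _).1 hy)
  · intro k h1 h2
    exact (Multiset.mem_sort _).2 (mem_mOf_of_lt _ _ h1 h2)
  · intro k h1 h2
    rw [List.mem_reverse]
    exact (Multiset.mem_sort _).2 (mem_mOf_of_lt _ _ h1 h2)
  · obtain ⟨⟨c, g, h⟩, hz1, hz2, hs⟩ := x
    rw [stackSize]
    dsimp only
    have e1 : (Multiset.sort (mOf c g) (· ≤ ·)).sum = (mOf c g).sum := by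
      rw [← Multiset.sum_coe, Multiset.sort_eq]
    have e2 : ((Multiset.sort (mOf c h) (· ≤ ·)).reverse).sum = (mOf c h).sum := by
      rw [List.sum_reverse, ← Multiset.sum_coe, Multiset.sort_eq]
    rw [e1, e2, mOf_sum, mOf_sum]
    dsimp only at hs
    rw [← two_gauss c] at hs
    omega

lemma stack_left_inv (n : ℕ) (s : StackT n) : midToStack n (stackToMid n s) = s := by
  classical
  obtain ⟨⟨a, c, b⟩, ⟨hca, hcb, hba, hbb, haa, hab⟩, hsz⟩ := s
  apply Subtype.ext
  simp only [midToStack, stackToMid]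
  have hma : mOf c (gOf c a) = (↑a : Multiset ℕ) := mOf_eq_coe c a hba haa
  have hmb : mOf c (gOf c b) = (↑b : Multiset ℕ) := mOf_eq_coe c b hbb hab
  refine Prod.ext ?_ (Prod.ext rfl ?_)
  · -- the sorted list is `a`
    dsimp only
    rw [hma]
    exact (fun p s1 s2 => List.Perm.eq_of_pairwise' s1 s2 p) (Multiset.coe_eq_coe.1 (Multiset.sort_eq _ _))
      (Multiset.pairwise_sort _ _) (List.isChain_iff_pairwise.1 hca)
  · -- the reversed sorted list is `b`
    dsimp only
    rw [hmb]
    suffices hsb : Multiset.sort ((↑b : Multiset ℕ)) (· ≤ ·) = b.reverse by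
      rw [hsb, List.reverse_reverse]
    exact (fun p s1 s2 => List.Perm.eq_of_pairwise' s1 s2 p)
      (Multiset.coe_eq_coe.1
        (by rw [Multiset.sort_eq]; exact Multiset.coe_eq_coe.2 (List.reverse_perm b).symm))
      (Multiset.pairwise_sort _ _)
      (List.pairwise_reverse.2 (List.isChain_iff_pairwise.1 hcb))

lemma stack_right_inv (n : ℕ) (x : MidT n) : stackToMid n (midToStack n x) = x := by
  classical
  obtain ⟨⟨c, g, h⟩, hz1, hz2, hs⟩ := x
  dsimp only at hz1 hz2 hs
  apply Subtype.ext
  simp only [stackToMid, midToStack]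
  have key : ∀ gg : ℕ → ℕ, (∀ i, c ≤ i → gg i = 0) →
      ∀ i, gOf c (Multiset.sort (mOf c gg) (· ≤ ·)) i = gg i := by
    intro gg hz i
    have hcnt : ∀ j : ℕ, j < c →
        List.count (j+1) (Multiset.sort (mOf c gg) (· ≤ ·))
          = gg j + (if j+1 < c then 1 else 0) := by
      intro j hj
      rw [← Multiset.coe_count, Multiset.sort_eq, mOf]
      simpa using count_bparts c (fun i => gg i + if i+1 < c then 1 else 0) hj
    simp only [gOf]
    by_cases h1 : i + 1 < c
    · rw [if_pos h1, hcnt i (by omega), if_pos h1]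
      omega
    · by_cases h2 : i + 1 = c
      · rw [if_neg h1, if_pos h2]
        have hc' := hcnt i (by omega)
        rw [if_neg h1, add_zero] at hc'
        rw [h2] at hc'
        exact hc'
      · rw [if_neg h1, if_neg h2, hz i (by omega)]
  have key' : ∀ gg : ℕ → ℕ, (∀ i, c ≤ i → gg i = 0) →
      ∀ i, gOf c ((Multiset.sort (mOf c gg) (· ≤ ·)).reverse) i = gg i := by
    intro gg hz i
    have hcnt : ∀ j : ℕ, j < c →
        List.count (j+1) ((Multiset.sort (mOf c gg) (· ≤ ·)).reverse)
          = gg j + (if j+1 < c then 1 else 0) := by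
      intro j hj
      rw [List.count_reverse, ← Multiset.coe_count, Multiset.sort_eq, mOf]
      simpa using count_bparts c (fun i => gg i + if i+1 < c then 1 else 0) hj
    simp only [gOf]
    by_cases h1 : i + 1 < c
    · rw [if_pos h1, hcnt i (by omega), if_pos h1]
      omega
    · by_cases h2 : i + 1 = c
      · rw [if_neg h1, if_pos h2]
        have hc' := hcnt i (by omega)
        rw [if_neg h1, add_zero] at hc'
        rw [h2] at hc'
        exact hc'
      · rw [if_neg h1, if_neg h2, hz i (by omega)]
  refine Prod.ext rfl (Prod.ext ?_ ?_)
  · dsimp only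
    funext i
    exact key g hz1 i
  · dsimp only
    funext i
    exact key' h hz2 i

def stackEquivMid (n : ℕ) : StackT n ≃ MidT n where
  toFun := stackToMid n
  invFun := midToStack n
  left_inv := stack_left_inv n
  right_inv := stack_right_inv n

/-- The number of receding stacks with summits of size `n` equals the number of
integer partitions of `n`. -/
theorem recedingStacksWithSummits_eq_partitions (n : ℕ) :
    Nat.card {s : List ℕ × ℕ × List ℕ // IsRecedingStackWithSummit s ∧ stackSize s = n} =
      Fintype.card (Nat.Partition n) := by
  calc Nat.card (StackT n) = Nat.card (MidT n) := Nat.card_congr (stackEquivMid n)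
    _ = Nat.card (Nat.Partition n) := Nat.card_congr (midEquivPartition n)
    _ = Fintype.card (Nat.Partition n) := Nat.card_eq_fintype_card
end

section
/- For every n ≥ 0, the number F_0(n) of Frobenius symbols of size n containing a zero in the top row equals the number g(n) of receding stacks of size n. -/
/-- A Frobenius symbol: two equal-length strictly decreasing sequences of
nonnegative integers. -/
def IsFrobeniusSymbol (F : List ℕ × List ℕ) : Prop :=
  F.1.length = F.2.length ∧ F.1.Chain' (· > ·) ∧ F.2.Chain' (· > ·)

/-- The size of a Frobenius symbol `(α; β)` is `k + ∑ αⱼ + ∑ βⱼ`. -/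
def frobSize (F : List ℕ × List ℕ) : ℕ := F.1.length + F.1.sum + F.2.sum

/-- A receding stack: `a₁ ≤ ... ≤ a_r ≤ c > b_s ≥ ... ≥ b₁`, all parts positive,
and every part size from `1` to `c-1` appears among the `a`'s and among the `b`'s. -/
def IsRecedingStack (s : List ℕ × ℕ × List ℕ) : Prop :=
  1 ≤ s.2.1 ∧ s.1.Chain' (· ≤ ·) ∧ s.2.2.Chain' (· ≥ ·) ∧
  (∀ x ∈ s.1, 1 ≤ x ∧ x ≤ s.2.1) ∧ (∀ x ∈ s.2.2, 1 ≤ x ∧ x < s.2.1) ∧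
  (∀ k, 1 ≤ k → k < s.2.1 → k ∈ s.1) ∧ (∀ k, 1 ≤ k → k < s.2.1 → k ∈ s.2.2)

namespace FrobStack

/-- `rnk c l` = the list `[r 1, r 2, ..., r c]` where `r j = #{x ∈ l : x ≥ j}`. -/
def rnk (c : ℕ) (l : List ℕ) : List ℕ :=
  (List.range c).map (fun i => l.countP (fun x => decide (i + 1 ≤ x)))

/-- `stk β` = the increasing list with `β.getD (v-1) 0 - β.getD v 0` copies of `v`. -/
def stk (β : List ℕ) : List ℕ :=
  (List.range β.length).flatMap
    (fun i => List.replicate (β.getD i 0 - β.getD (i+1) 0) (i+1))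

@[simp] lemma rnk_length (c : ℕ) (l : List ℕ) : (rnk c l).length = c := by
  simp [rnk]

lemma rnk_getElem (c : ℕ) (l : List ℕ) (i : ℕ) (h : i < c) :
    (rnk c l)[i]'(by simpa using h) = l.countP (fun x => decide (i + 1 ≤ x)) := by
  simp [rnk]

lemma rnk_getD (c : ℕ) (l : List ℕ) (i : ℕ) :
    (rnk c l).getD i 0 = if i < c then l.countP (fun x => decide (i + 1 ≤ x)) else 0 := by
  split
  · next h =>
    rw [List.getD_eq_getElem _ _ (by simpa using h), rnk_getElem c l i h]
  · next h =>
    exact List.getD_eq_default _ _ (by simpa using Nat.le_of_not_lt h)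

lemma rnk_reverse (c : ℕ) (l : List ℕ) : rnk c l.reverse = rnk c l := by
  simp [rnk]

/-- helper: list-range sum = finset-range sum -/
lemma sum_map_range (n : ℕ) (f : ℕ → ℕ) :
    ((List.range n).map f).sum = ∑ i ∈ Finset.range n, f i := by
  induction n with
  | zero => simp
  | succ n ih => rw [List.range_succ, Finset.sum_range_succ]; simp [ih]

lemma antitone_of_step (f : ℕ → ℕ) (h : ∀ i, f (i+1) ≤ f i) :
    ∀ {a b : ℕ}, a ≤ b → f b ≤ f a := by
  intro a b hab
  induction b with
  | zero => have : a = 0 := by omega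
            subst this; exact le_refl _
  | succ b ih =>
    rcases Nat.eq_or_lt_of_le hab with h' | h'
    · subst h'; exact le_refl _
    · exact le_trans (h b) (ih (by omega))

/-- telescoping -/
lemma tele (f : ℕ → ℕ) (h : ∀ i, f (i+1) ≤ f i) :
    ∀ a b, a ≤ b → ∑ i ∈ Finset.Ico a b, (f i - f (i+1)) = f a - f b := by
  intro a b hab
  induction b with
  | zero =>
    have : a = 0 := by omega
    subst this; simp
  | succ b ih =>
    rcases Nat.lt_or_ge a (b+1) with hlt | hge
    · have hab' : a ≤ b := by omega
      rw [Finset.sum_Ico_succ_top hab', ih hab']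
      have h1 : f (b+1) ≤ f b := h b
      have h2 : f b ≤ f a := antitone_of_step f h hab'
      omega
    · have : a = b + 1 := by omega
      subst this; simp

lemma antitone_getD {β : List ℕ} (hβ : β.Chain' (· > ·)) (i : ℕ) :
    β.getD (i+1) 0 ≤ β.getD i 0 := by
  rcases Nat.lt_or_ge (i+1) β.length with h | h
  · rw [List.getD_eq_getElem _ _ h, List.getD_eq_getElem _ _ (by omega)]
    exact le_of_lt (List.pairwise_iff_getElem.mp (List.isChain_iff_pairwise.mp hβ)
      i (i+1) (by omega) h (by omega))
  · rw [List.getD_eq_default _ _ h]; exact Nat.zero_le _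

lemma rnk_antitone (c : ℕ) (l : List ℕ) (i : ℕ) :
    (rnk c l).getD (i+1) 0 ≤ (rnk c l).getD i 0 := by
  rw [rnk_getD, rnk_getD]
  split
  · next h =>
    rw [if_pos (by omega)]
    exact List.countP_mono_left (fun x _ hx => by
      simp only [decide_eq_true_eq] at *; omega)
  · next h => exact Nat.zero_le _

lemma countP_stk {β : List ℕ} (hstep : ∀ i, β.getD (i+1) 0 ≤ β.getD i 0) (j : ℕ) :
    (stk β).countP (fun x => decide (j + 1 ≤ x)) = β.getD j 0 := by
  rw [stk, List.countP_flatMap]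
  have heq : (List.range β.length).map
      (List.countP (fun x => decide (j+1 ≤ x)) ∘
        fun i => List.replicate (β.getD i 0 - β.getD (i+1) 0) (i+1)) =
      (List.range β.length).map
        (fun i => if j ≤ i then β.getD i 0 - β.getD (i+1) 0 else 0) := by
    apply List.map_congr_left
    intro i _
    simp only [Function.comp_apply, List.countP_replicate, decide_eq_true_eq]
    by_cases h : j ≤ i
    · rw [if_pos (by omega), if_pos h]
    · rw [if_neg (by omega), if_neg h]
  rw [heq, sum_map_range]
  have hfil : ∑ i ∈ Finset.range β.length, (if j ≤ i then β.getD i 0 - β.getD (i+1) 0 else 0)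
      = ∑ i ∈ Finset.Ico j β.length, (β.getD i 0 - β.getD (i+1) 0) := by
    rw [Finset.sum_filter (fun i => j ≤ i) _ |>.symm]
    congr 1
    ext i
    simp only [Finset.mem_filter, Finset.mem_range, Finset.mem_Ico]
    omega
  rw [hfil]
  rcases Nat.lt_or_ge j β.length with h | h
  · rw [tele _ hstep j β.length (by omega)]
    rw [List.getD_eq_default _ _ (le_refl _)]
    omega
  · rw [Finset.Ico_eq_empty (by omega), Finset.sum_empty,
      List.getD_eq_default _ _ h]

lemma count_stk {β : List ℕ} (hstep : ∀ i, β.getD (i+1) 0 ≤ β.getD i 0) (v : ℕ) :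
    (stk β).count v =
      if 1 ≤ v ∧ v ≤ β.length then β.getD (v-1) 0 - β.getD v 0 else 0 := by
  rw [stk, List.count, List.countP_flatMap]
  have heq : (List.range β.length).map
      (List.countP (fun x => x == v) ∘
        fun i => List.replicate (β.getD i 0 - β.getD (i+1) 0) (i+1)) =
      (List.range β.length).map
        (fun i => if i = v - 1 ∧ 1 ≤ v then β.getD i 0 - β.getD (i+1) 0 else 0) := by
    apply List.map_congr_left
    intro i _
    simp only [Function.comp_apply, List.countP_replicate, beq_iff_eq]
    by_cases h : i + 1 = v
    · rw [if_pos h, if_pos (by omega)]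
    · rw [if_neg h, if_neg (by omega)]
  rw [heq, sum_map_range]
  by_cases hv : 1 ≤ v
  · have : ∀ i ∈ Finset.range β.length,
        (if i = v - 1 ∧ 1 ≤ v then β.getD i 0 - β.getD (i+1) 0 else 0) =
        (if i = v - 1 then β.getD i 0 - β.getD (i+1) 0 else 0) := by
      intro i _
      by_cases h : i = v - 1
      · rw [if_pos ⟨h, hv⟩, if_pos h]
      · rw [if_neg (fun hc => h hc.1), if_neg h]
    rw [Finset.sum_congr rfl this, Finset.sum_ite_eq' (Finset.range β.length) (v-1)]
    by_cases h : v ≤ β.length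
    · rw [if_pos (by simp; omega), if_pos ⟨hv, h⟩]
      rw [show v - 1 + 1 = v by omega]
    · rw [if_neg (by simp; omega), if_neg (by omega)]
  · have : ∀ i ∈ Finset.range β.length,
        (if i = v - 1 ∧ 1 ≤ v then β.getD i 0 - β.getD (i+1) 0 else 0) = 0 := by
      intro i _
      rw [if_neg (fun hc => hv hc.2)]
    rw [Finset.sum_congr rfl this, Finset.sum_const, smul_zero, if_neg (by omega)]

lemma mem_stk_bounds {β : List ℕ} {x : ℕ} (hx : x ∈ stk β) :
    1 ≤ x ∧ x ≤ β.length := by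
  rw [stk, List.mem_flatMap] at hx
  obtain ⟨i, hi, hx⟩ := hx
  rw [List.mem_range] at hi
  have := List.eq_of_mem_replicate hx
  omega

lemma stk_sorted (β : List ℕ) : (stk β).Chain' (· ≤ ·) := by
  show List.IsChain _ _
  rw [List.isChain_iff_pairwise, stk, List.flatMap_def, List.pairwise_flatten]
  constructor
  · intro l hl
    rw [List.mem_map] at hl
    obtain ⟨i, _, rfl⟩ := hl
    exact List.pairwise_replicate.mpr (Or.inr (le_refl _))
  · rw [List.pairwise_map]
    apply List.Pairwise.imp ?_ (List.pairwise_lt_range (n := β.length))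
    intro i j hij x hx y hy
    have hx' := List.eq_of_mem_replicate hx
    have hy' := List.eq_of_mem_replicate hy
    omega

lemma countP_succ_add (l : List ℕ) (j : ℕ) :
    l.countP (fun x => decide (j ≤ x)) =
      l.countP (fun x => decide (j + 1 ≤ x)) + l.count j := by
  induction l with
  | nil => simp
  | cons a l ih =>
    rw [List.countP_cons, List.countP_cons, List.count_cons, ih]
    simp only [decide_eq_true_eq, beq_iff_eq]
    split <;> split <;> split <;> omega

lemma rnk_chain (c : ℕ) (l : List ℕ) (hmem : ∀ v, 1 ≤ v → v < c → v ∈ l) :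
    (rnk c l).Chain' (· > ·) := by
  show List.IsChain _ _
  rw [rnk, List.isChain_map]
  cases c with
  | zero => simp
  | succ n =>
    rw [List.isChain_range_succ]
    intro m hm
    have h1 : m + 1 ∈ l := hmem (m+1) (by omega) (by omega)
    have h2 := countP_succ_add l (m+1)
    have h3 : 0 < l.count (m+1) := List.count_pos_iff.mpr h1
    simp only [gt_iff_lt, Nat.succ_eq_add_one]
    omega

lemma zero_last {β : List ℕ} (hβ : β.Chain' (· > ·)) (h0 : (0:ℕ) ∈ β) :
    β.getD (β.length - 1) 0 = 0 := by
  obtain ⟨i, hi, hget⟩ := List.mem_iff_getElem.mp h0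
  have hne : β.length ≠ 0 := by intro h; rw [List.length_eq_zero_iff] at h; simp [h] at h0
  rcases Nat.lt_or_ge i (β.length - 1) with h | h
  · exfalso
    have := List.pairwise_iff_getElem.mp (List.isChain_iff_pairwise.mp hβ)
      i (β.length - 1) hi (by omega) h
    omega
  · have hieq : i = β.length - 1 := by omega
    subst hieq
    rw [List.getD_eq_getElem _ _ (show β.length - 1 < β.length by omega)]
    exact hget

lemma rnk_zero_mem (c : ℕ) (l : List ℕ) (hc : 1 ≤ c) (hb : ∀ x ∈ l, x < c) :
    (0:ℕ) ∈ rnk c l := by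
  rw [rnk, List.mem_map]
  refine ⟨c - 1, List.mem_range.mpr (by omega), ?_⟩
  rw [show c - 1 + 1 = c by omega]
  rw [List.countP_eq_zero.mpr]
  intro a ha
  simp only [decide_eq_true_eq]
  exact fun hca => by have := hb a ha; omega

lemma sum_ite_min (c x : ℕ) :
    (∑ i ∈ Finset.range c, if i + 1 ≤ x then 1 else 0) = min x c := by
  induction c with
  | zero => simp
  | succ n ih =>
    rw [Finset.sum_range_succ, ih]
    split <;> omega

lemma rnk_sum (c : ℕ) (l : List ℕ) (hb : ∀ x ∈ l, x ≤ c) :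
    (rnk c l).sum = l.sum := by
  induction l with
  | nil => simp [rnk, List.countP_nil]
  | cons x l ih =>
    have hx : x ≤ c := hb x (by simp)
    have hb' : ∀ y ∈ l, y ≤ c := fun y hy => hb y (by simp [hy])
    have heq : rnk c (x :: l) = (List.range c).map
        (fun i => l.countP (fun y => decide (i + 1 ≤ y)) + if i + 1 ≤ x then 1 else 0) := by
      rw [rnk]
      apply List.map_congr_left
      intro i _
      rw [List.countP_cons]
      simp only [decide_eq_true_eq]
    rw [heq, sum_map_range, Finset.sum_add_distrib, sum_ite_min, ← sum_map_range, ← rnk,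
      ih hb', List.sum_cons]
    omega

lemma rnk_stk {β : List ℕ} (hβ : β.Chain' (· > ·)) : rnk β.length (stk β) = β := by
  apply List.ext_getElem (by simp)
  intro i h1 h2
  rw [rnk_getElem _ _ _ (by simpa using h1), countP_stk (antitone_getD hβ) i,
    List.getD_eq_getElem _ _ h2]

lemma stk_rnk {c : ℕ} {l : List ℕ} (hl : l.Chain' (· ≤ ·))
    (hb : ∀ x ∈ l, 1 ≤ x ∧ x ≤ c) : stk (rnk c l) = l := by
  refine (fun (hp : List.Perm (stk (rnk c l)) l) h1 h2 =>
    List.Perm.eq_of_pairwise' (r := (· ≤ ·)) h1 h2 hp) ?_ ?_ ?_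
  · rw [List.perm_iff_count]
    intro v
    rw [count_stk (rnk_antitone c l) v, rnk_length]
    by_cases hv : 1 ≤ v ∧ v ≤ c
    · rw [if_pos hv, rnk_getD, rnk_getD, if_pos (by omega),
        show v - 1 + 1 = v by omega]
      by_cases hvc : v < c
      · rw [if_pos hvc, countP_succ_add l v]
        have : l.countP (fun x => decide (v + 1 ≤ x)) ≤ l.countP (fun x => decide (v ≤ x)) :=
          List.countP_mono_left (fun x _ hx => by
            simp only [decide_eq_true_eq] at *; omega)
        omega
      · rw [if_neg hvc]
        rw [countP_succ_add l v]
        have : l.countP (fun x => decide (v + 1 ≤ x)) = 0 := by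
          rw [List.countP_eq_zero]
          intro a ha
          simp only [decide_eq_true_eq]
          have := (hb a ha).2
          omega
        omega
    · rw [if_neg hv, eq_comm, List.count_eq_zero]
      intro hmem
      exact hv ⟨(hb v hmem).1, (hb v hmem).2⟩
  · exact List.isChain_iff_pairwise.mp (stk_sorted _)
  · exact List.isChain_iff_pairwise.mp hl

lemma mem_stk_of_lt {β : List ℕ} (hβ : β.Chain' (· > ·)) {v : ℕ}
    (h1 : 1 ≤ v) (h2 : v < β.length) : v ∈ stk β := by
  rw [← List.count_pos_iff, count_stk (antitone_getD hβ) v, if_pos ⟨h1, by omega⟩,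
    List.getD_eq_getElem _ _ (show v - 1 < β.length by omega),
    List.getD_eq_getElem _ _ h2]
  have := List.pairwise_iff_getElem.mp (List.isChain_iff_pairwise.mp hβ)
    (v-1) v (by omega) h2 (by omega)
  omega

lemma stk_lt_of_zero {α : List ℕ} (hα : α.Chain' (· > ·)) (h0 : (0:ℕ) ∈ α)
    {x : ℕ} (hx : x ∈ stk α) : x < α.length := by
  have hb := mem_stk_bounds hx
  rcases Nat.lt_or_ge x α.length with h | h
  · exact h
  · exfalso
    have hxe : x = α.length := by omega
    have hcount : (stk α).count x = 0 := by
      rw [count_stk (antitone_getD hα) x, if_pos ⟨by omega, by omega⟩, hxe,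
        zero_last hα h0, List.getD_eq_default _ _ (le_refl _)]
    have := List.count_pos_iff.mpr hx
    omega

/-- forward map: Frobenius symbol to stack -/
def fwd (F : List ℕ × List ℕ) : List ℕ × ℕ × List ℕ :=
  (stk F.2, F.1.length, (stk F.1).reverse)

/-- backward map: stack to Frobenius symbol -/
def bwd (s : List ℕ × ℕ × List ℕ) : List ℕ × List ℕ :=
  (rnk s.2.1 s.2.2, rnk s.2.1 s.1)

lemma stk_sum {β : List ℕ} (hβ : β.Chain' (· > ·)) : (stk β).sum = β.sum := by
  conv_rhs => rw [← rnk_stk hβ]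
  rw [rnk_sum]
  exact fun x hx => (mem_stk_bounds hx).2

lemma fwd_spec {F : List ℕ × List ℕ} (hF : IsFrobeniusSymbol F) (h0 : 0 ∈ F.1) :
    IsRecedingStack (fwd F) ∧ stackSize (fwd F) = frobSize F := by
  obtain ⟨α, β⟩ := F
  obtain ⟨hlen, hα, hβ⟩ := hF
  simp only at hlen hα hβ h0
  have hk : 1 ≤ α.length := List.length_pos_iff.mpr (List.ne_nil_of_mem h0)
  constructor
  · refine ⟨hk, stk_sorted β, List.isChain_reverse.mpr (stk_sorted α), ?_, ?_, ?_, ?_⟩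
    · intro x hx
      have h := mem_stk_bounds (show x ∈ stk β from hx)
      refine ⟨h.1, ?_⟩
      show x ≤ α.length
      omega
    · intro x hx
      have hx' : x ∈ stk α := List.mem_reverse.mp hx
      exact ⟨(mem_stk_bounds hx').1, stk_lt_of_zero hα h0 hx'⟩
    · intro v hv1 hv2
      have hv2' : v < α.length := hv2
      show v ∈ stk β
      exact mem_stk_of_lt hβ hv1 (by omega)
    · intro v hv1 hv2
      have hv2' : v < α.length := hv2
      show v ∈ (stk α).reverse
      rw [List.mem_reverse]
      exact mem_stk_of_lt hα hv1 (by omega)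
  · show (stk β).sum + α.length + ((stk α).reverse).sum = α.length + α.sum + β.sum
    rw [List.sum_reverse, stk_sum hα, stk_sum hβ]
    omega

lemma bwd_spec {s : List ℕ × ℕ × List ℕ} (hs : IsRecedingStack s) :
    (IsFrobeniusSymbol (bwd s) ∧ 0 ∈ (bwd s).1) ∧ frobSize (bwd s) = stackSize s := by
  obtain ⟨a, c, b⟩ := s
  obtain ⟨h1, h2, h3, h4, h5, h6, h7⟩ := hs
  simp only at h1 h2 h3 h4 h5 h6 h7
  refine ⟨⟨⟨?_, ?_, ?_⟩, ?_⟩, ?_⟩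
  · show (rnk c b).length = (rnk c a).length
    simp
  · exact rnk_chain c b h7
  · exact rnk_chain c a h6
  · show (0:ℕ) ∈ rnk c b
    exact rnk_zero_mem c b h1 (fun x hx => (h5 x hx).2)
  · show (rnk c b).length + (rnk c b).sum + (rnk c a).sum = a.sum + c + b.sum
    rw [rnk_length, rnk_sum c b (fun x hx => by have := h5 x hx; omega),
      rnk_sum c a (fun x hx => (h4 x hx).2)]
    omega

lemma bwd_fwd {F : List ℕ × List ℕ} (hF : IsFrobeniusSymbol F) (h0 : 0 ∈ F.1) :
    bwd (fwd F) = F := by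
  obtain ⟨α, β⟩ := F
  obtain ⟨hlen, hα, hβ⟩ := hF
  simp only at hlen hα hβ h0
  show (rnk α.length ((stk α).reverse), rnk α.length (stk β)) = (α, β)
  rw [rnk_reverse, rnk_stk hα, hlen, rnk_stk hβ]

lemma fwd_bwd {s : List ℕ × ℕ × List ℕ} (hs : IsRecedingStack s) :
    fwd (bwd s) = s := by
  obtain ⟨a, c, b⟩ := s
  obtain ⟨h1, h2, h3, h4, h5, h6, h7⟩ := hs
  simp only at h1 h2 h3 h4 h5 h6 h7
  show (stk (rnk c a), (rnk c b).length, (stk (rnk c b)).reverse) = (a, c, b)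
  have hbrev : b.reverse.Chain' (· ≤ ·) := List.isChain_reverse.mpr h3
  have e1 : stk (rnk c a) = a := stk_rnk h2 h4
  have e2 : stk (rnk c b) = b.reverse := by
    rw [← rnk_reverse]
    exact stk_rnk hbrev (fun x hx => by
      rw [List.mem_reverse] at hx
      have := h5 x hx; omega)
  rw [e1, e2, rnk_length, List.reverse_reverse]

end FrobStack

open FrobStack

/-- For every `n ≥ 0`, the number of Frobenius symbols of size `n` containing a zero
in the top row equals the number of receding stacks of size `n`. -/
theorem frobeniusWithZero_eq_recedingStacks (n : ℕ) :
    Nat.card {F : List ℕ × List ℕ // IsFrobeniusSymbol F ∧ 0 ∈ F.1 ∧ frobSize F = n} =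
      Nat.card {s : List ℕ × ℕ × List ℕ // IsRecedingStack s ∧ stackSize s = n} := by
  apply Nat.card_congr
  refine ⟨fun F => ⟨fwd F.1, ?_, ?_⟩, fun s => ⟨bwd s.1, ?_, ?_, ?_⟩, ?_, ?_⟩
  · exact (fwd_spec F.2.1 F.2.2.1).1
  · rw [(fwd_spec F.2.1 F.2.2.1).2]; exact F.2.2.2
  · exact (bwd_spec s.2.1).1.1
  · exact (bwd_spec s.2.1).1.2
  · rw [(bwd_spec s.2.1).2]; exact s.2.2
  · intro F
    exact Subtype.ext (bwd_fwd F.2.1 F.2.2.1)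
  · intro s
    exact Subtype.ext (fwd_bwd s.2.1)
end

section
/- The generating function for semi-strict stacks satisfies ∑_{m ≥ 0} (-q;q)_m q^{m+1} / (q;q)_m = q (q²;q²)_∞ / ((1+q) ((q;q)_∞)²) as an identity of formal power series (equivalently, of holomorphic functions on |q| < 1). -/
open PowerSeries

/-- The q-Pochhammer symbol `(q;q)_m = ∏_{j=1}^m (1 - q^j)`. -/
noncomputable def qPoch (m : ℕ) : PowerSeries ℚ :=
  ∏ j ∈ Finset.range m, (1 - PowerSeries.X ^ (j + 1))

/-- The q-Pochhammer symbol `(-q;q)_m = ∏_{j=1}^m (1 + q^j)`. -/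
noncomputable def negqPoch (m : ℕ) : PowerSeries ℚ :=
  ∏ j ∈ Finset.range m, (1 + PowerSeries.X ^ (j + 1))

/-- The infinite product `(q;q)_∞ = ∏_{j≥1}(1 - q^j)`, defined coefficientwise
(the `n`-th coefficient agrees with that of any partial product with at least `n`
factors). -/
noncomputable def qPochInf : PowerSeries ℚ :=
  PowerSeries.mk fun n => PowerSeries.coeff n (qPoch (n + 1))

/-- The infinite product `(q²;q²)_∞ = ∏_{j≥1}(1 - q^{2j})`, defined coefficientwise. -/
noncomputable def qPochInf2 : PowerSeries ℚ :=
  PowerSeries.mk fun n =>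
    PowerSeries.coeff n (∏ j ∈ Finset.range (n + 1), (1 - PowerSeries.X ^ (2 * (j + 1))))

/-- The formal sum `∑_{m ≥ 0} F m` of a family of power series in which the `m`-th
term has order at least `m`, defined coefficientwise. -/
noncomputable def formalSum (F : ℕ → PowerSeries ℚ) : PowerSeries ℚ :=
  PowerSeries.mk fun n => ∑ m ∈ Finset.range (n + 1), PowerSeries.coeff n (F m)

/-! ### Auxiliary lemmas -/

/-- `(-q²;q)_m = ∏_{j=1}^m (1 + q^{j+1})`. -/
noncomputable def aPoch (m : ℕ) : PowerSeries ℚ :=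
  ∏ j ∈ Finset.range m, (1 + PowerSeries.X ^ (j + 2))

lemma constCoeff_qPoch (m : ℕ) : constantCoeff (qPoch m) = 1 := by
  simp [qPoch]

lemma qPoch_mul_inv (m : ℕ) : qPoch m * (qPoch m)⁻¹ = 1 :=
  PowerSeries.mul_inv_cancel _ (by simp [constCoeff_qPoch])

lemma qPoch_ne_zero (m : ℕ) : qPoch m ≠ 0 := by
  intro h
  have := constCoeff_qPoch m
  rw [h] at this
  simp at this

lemma qPoch_succ (m : ℕ) : qPoch (m + 1) = qPoch m * (1 - X ^ (m + 1)) :=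
  Finset.prod_range_succ _ _

lemma aPoch_succ (m : ℕ) : aPoch (m + 1) = aPoch m * (1 + X ^ (m + 2)) :=
  Finset.prod_range_succ _ _

lemma negqPoch_succ' (m : ℕ) : negqPoch (m + 1) = (1 + X) * aPoch m := by
  rw [negqPoch, Finset.prod_range_succ']
  rw [mul_comm]
  norm_num [aPoch]

lemma negq_mul_q (m : ℕ) :
    negqPoch m * qPoch m = ∏ j ∈ Finset.range m, (1 - X ^ (2 * (j + 1))) := by
  rw [negqPoch, qPoch, ← Finset.prod_mul_distrib]
  refine Finset.prod_congr rfl fun j _ => ?_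
  ring

/-- Telescoping: partial sums of the semi-strict stack generating function. -/
lemma partial_sum (M : ℕ) :
    ∑ m ∈ Finset.range (M + 1), negqPoch m * X ^ (m + 1) * (qPoch m)⁻¹
      = X * aPoch M * (qPoch M)⁻¹ := by
  induction M with
  | zero =>
      simp [negqPoch, qPoch, aPoch]
  | succ M ih =>
      rw [Finset.sum_range_succ, ih]
      apply mul_right_cancel₀ (qPoch_ne_zero (M + 1))
      have h1 : (qPoch M)⁻¹ * qPoch (M + 1) = 1 - X ^ (M + 1) := by
        rw [qPoch_succ]
        calc (qPoch M)⁻¹ * (qPoch M * (1 - X ^ (M + 1)))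
            = qPoch M * (qPoch M)⁻¹ * (1 - X ^ (M + 1)) := by ring
          _ = 1 - X ^ (M + 1) := by rw [qPoch_mul_inv, one_mul]
      have h2 : (qPoch (M + 1))⁻¹ * qPoch (M + 1) = 1 := by
        rw [mul_comm]; exact qPoch_mul_inv _
      rw [negqPoch_succ', aPoch_succ]
      linear_combination (X * aPoch M) * h1 +
        ((1 + X) * aPoch M * X ^ (M + 2) - X * aPoch M * (1 + X ^ (M + 2))) * h2

/-- Coefficients of products only depend on the lower coefficients of the factors. -/
lemma eqUpTo_mul {n : ℕ} {P P' Q Q' : PowerSeries ℚ}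
    (hP : ∀ k ≤ n, coeff k P = coeff k P')
    (hQ : ∀ k ≤ n, coeff k Q = coeff k Q') :
    ∀ k ≤ n, coeff k (P * Q) = coeff k (P' * Q') := by
  intro k hk
  rw [coeff_mul, coeff_mul]
  refine Finset.sum_congr rfl fun p hp => ?_
  have hpk := Finset.HasAntidiagonal.mem_antidiagonal.mp hp
  rw [hP p.1 (le_trans (le_of_add_le_left hpk.le) hk),
    hQ p.2 (le_trans (le_of_add_le_right hpk.le) hk)]

/-- Stabilization of coefficients of partial products `∏_{j<M}(1 - X^{f j})`
with `f j > j`. -/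
lemma coeff_prod_stable (f : ℕ → ℕ) (hf : ∀ j, j < f j) (k M M' : ℕ)
    (hkM : k < M) (h : M ≤ M') :
    coeff (R := ℚ) k (∏ j ∈ Finset.range M', (1 - X ^ f j))
      = coeff (R := ℚ) k (∏ j ∈ Finset.range M, (1 - X ^ f j)) := by
  induction M', h using Nat.le_induction with
  | base => rfl
  | succ M' hMM' ih =>
      rw [Finset.prod_range_succ, mul_sub, mul_one, map_sub, coeff_mul_X_pow',
        if_neg, sub_zero, ih]
      have : k < f M' := lt_of_lt_of_le hkM (le_trans hMM' (hf M').le)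
      omega

lemma constCoeff_qPochInf : constantCoeff qPochInf = 1 := by
  rw [qPochInf, constantCoeff_mk, coeff_zero_eq_constantCoeff_apply, constCoeff_qPoch]

/-- `∑_{m ≥ 0} (-q;q)_m q^{m+1}/(q;q)_m = q (q²;q²)_∞ / ((1+q)((q;q)_∞)²)`,
the generating function identity for semi-strict stacks. -/
theorem semiStrict_genFn_eta_quotient :
    formalSum (fun m => negqPoch m * X ^ (m + 1) * (qPoch m)⁻¹) =
      X * qPochInf2 * ((1 + X) * qPochInf ^ 2)⁻¹ := by
  set L : PowerSeries ℚ := formalSum (fun m => negqPoch m * X ^ (m + 1) * (qPoch m)⁻¹) with hL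
  have hMc : constantCoeff ((1 + X) * qPochInf ^ 2) ≠ 0 := by
    rw [map_mul, map_pow, constCoeff_qPochInf, map_add, constantCoeff_X, constantCoeff_one]
    norm_num
  have key : L * ((1 + X) * qPochInf ^ 2) = X * qPochInf2 := by
    ext n
    -- Replace each factor by a finite approximation valid up to degree `n`.
    have hLapprox : ∀ k ≤ n, coeff k L =
        coeff k (∑ m ∈ Finset.range (n + 1), negqPoch m * X ^ (m + 1) * (qPoch m)⁻¹) := by
      intro k hk
      rw [hL, formalSum, coeff_mk, map_sum]
      refine Finset.sum_subset (Finset.range_subset_range.mpr (by omega)) fun m _ hm => ?_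
      have hkm : k < m + 1 := by
        simp only [Finset.mem_range, not_lt] at hm; omega
      have : negqPoch m * X ^ (m + 1) * (qPoch m)⁻¹
          = negqPoch m * (qPoch m)⁻¹ * X ^ (m + 1) := by ring
      rw [this, coeff_mul_X_pow', if_neg (by omega)]
    have hCapprox : ∀ k ≤ n, coeff k qPochInf = coeff k (qPoch (n + 1)) := by
      intro k hk
      rw [qPochInf, coeff_mk]
      exact (coeff_prod_stable (fun j => j + 1) (fun j => Nat.lt_succ_self j) k (k + 1) (n + 1)
        (by omega) (by omega)).symm
    have hBapprox : ∀ k ≤ n, coeff k qPochInf2 =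
        coeff k (∏ j ∈ Finset.range (n + 1), (1 - X ^ (2 * (j + 1)))) := by
      intro k hk
      rw [qPochInf2, coeff_mk]
      exact (coeff_prod_stable (fun j => 2 * (j + 1)) (fun j => by show j < 2 * (j + 1); omega)
        k (k + 1) (n + 1) (by omega) (by omega)).symm
    have hsq : ∀ k ≤ n, coeff k (qPochInf ^ 2) = coeff k (qPoch (n + 1) ^ 2) := by
      rw [sq qPochInf, sq (qPoch (n + 1))]
      exact eqUpTo_mul hCapprox hCapprox
    have hMapprox : ∀ k ≤ n, coeff k ((1 + X) * qPochInf ^ 2)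
        = coeff k ((1 + X) * qPoch (n + 1) ^ 2) :=
      eqUpTo_mul (fun k _ => rfl) hsq
    have step1 : coeff n (L * ((1 + X) * qPochInf ^ 2)) =
        coeff n ((∑ m ∈ Finset.range (n + 1), negqPoch m * X ^ (m + 1) * (qPoch m)⁻¹)
          * ((1 + X) * qPoch (n + 1) ^ 2)) :=
      eqUpTo_mul hLapprox hMapprox n le_rfl
    -- exact identity for the finite approximations
    have hexact : (∑ m ∈ Finset.range (n + 1), negqPoch m * X ^ (m + 1) * (qPoch m)⁻¹)
          * ((1 + X) * qPoch (n + 1) ^ 2)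
        = X * (∏ j ∈ Finset.range (n + 1), (1 - X ^ (2 * (j + 1)))) * (1 - X ^ (n + 1)) := by
      rw [partial_sum, ← negq_mul_q (n + 1), negqPoch_succ']
      rw [qPoch_succ]
      linear_combination (X * aPoch n * (1 + X) * (1 - X ^ (n + 1)) ^ 2 * qPoch n)
        * qPoch_mul_inv n
    have step2 : coeff (R := ℚ) n
        (X * (∏ j ∈ Finset.range (n + 1), (1 - X ^ (2 * (j + 1)))) * (1 - X ^ (n + 1)))
        = coeff (R := ℚ) n (X * (∏ j ∈ Finset.range (n + 1), (1 - X ^ (2 * (j + 1))))) := by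
      rw [mul_sub, mul_one, map_sub, coeff_mul_X_pow', if_neg (by omega), sub_zero]
    have step3 : coeff n (X * qPochInf2)
        = coeff n (X * (∏ j ∈ Finset.range (n + 1), (1 - X ^ (2 * (j + 1))))) :=
      eqUpTo_mul (n := n) (fun k _ => rfl) hBapprox n le_rfl
    rw [step1, hexact, step2, step3]
  calc L = L * (((1 + X) * qPochInf ^ 2) * ((1 + X) * qPochInf ^ 2)⁻¹) := by
        rw [PowerSeries.mul_inv_cancel _ hMc, mul_one]
    _ = (L * ((1 + X) * qPochInf ^ 2)) * ((1 + X) * qPochInf ^ 2)⁻¹ := by ring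
    _ = X * qPochInf2 * ((1 + X) * qPochInf ^ 2)⁻¹ := by rw [key]
end

section
/- For |x| < 1, the limit as ε → 0⁺ of ε · Li₂(x; e^{-ε}) equals Li₂(x), where Li₂(x;q) := ∑_{m ≥ 1} x^m / (m(1-q^m)) is the quantum dilogarithm and Li₂(x) := ∑_{m ≥ 1} x^m/m² is the classical dilogarithm. -/
open Filter Complex Topology

lemma aux_exp (t : ℝ) (ht : 0 < t) : t / (1 + t) ≤ 1 - Real.exp (-t) := by
  have h1 : t + 1 ≤ Real.exp t := Real.add_one_le_exp t
  have h2 : Real.exp (-t) = (Real.exp t)⁻¹ := Real.exp_neg t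
  have h3 : 0 < Real.exp t := Real.exp_pos t
  rw [h2, div_le_iff₀ (by linarith)]
  have h4 : (Real.exp t)⁻¹ * Real.exp t = 1 := inv_mul_cancel₀ (ne_of_gt h3)
  nlinarith [h4, h1, inv_pos.mpr h3]

lemma aux_tendsto (c : ℂ) (hc : c ≠ 0) :
    Tendsto (fun ε : ℝ => (ε : ℂ) * (1 - Complex.exp (-(ε : ℂ) * c))⁻¹)
      (𝓝[>] (0:ℝ)) (𝓝 c⁻¹) := by
  have h1 : HasDerivAt (fun t : ℝ => -(t : ℂ) * c) (-c) 0 := by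
    simpa using (Complex.ofRealCLM.hasDerivAt (x := (0:ℝ))).neg.mul_const c
  have h2 : HasDerivAt (fun t : ℝ => 1 - Complex.exp (-(t : ℂ) * c)) c 0 := by
    simpa using (h1.cexp).const_sub 1
  rw [hasDerivAt_iff_tendsto_slope] at h2
  have h3 : Tendsto (fun t : ℝ => (slope (fun t : ℝ => 1 - Complex.exp (-(t : ℂ) * c)) 0 t)⁻¹)
      (𝓝[>] (0:ℝ)) (𝓝 c⁻¹) :=
    (h2.mono_left (nhdsWithin_mono _ fun t ht => ne_of_gt ht)).inv₀ hc
  refine h3.congr fun t => ?_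
  simp [slope_def_module, Complex.real_smul, mul_inv, Complex.ofReal_inv, mul_comm]

/-- For `|x| < 1`, `lim_{ε→0⁺} ε · Li₂(x; e^{-ε}) = Li₂(x)`, where
`Li₂(x;q) = ∑_{m≥1} x^m/(m(1-q^m))` is the quantum dilogarithm and
`Li₂(x) = ∑_{m≥1} x^m/m²` the classical dilogarithm. -/
theorem quantum_dilog_limit (x : ℂ) (hx : ‖x‖ < 1) :
    Tendsto
      (fun ε : ℝ =>
        (ε : ℂ) * ∑' m : ℕ, x ^ (m + 1) /
          (((m : ℂ) + 1) * (1 - Complex.exp (-(ε : ℂ) * ((m : ℂ) + 1)))))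
      (nhdsWithin 0 (Set.Ioi 0))
      (nhds (∑' m : ℕ, x ^ (m + 1) / ((m : ℂ) + 1) ^ 2)) := by
  have key : Tendsto
      (fun ε : ℝ => ∑' m : ℕ, (ε : ℂ) * (x ^ (m + 1) /
          (((m : ℂ) + 1) * (1 - Complex.exp (-(ε : ℂ) * ((m : ℂ) + 1))))))
      (𝓝[>] (0:ℝ)) (𝓝 (∑' m : ℕ, x ^ (m + 1) / ((m : ℂ) + 1) ^ 2)) := by
    apply tendsto_tsum_of_dominated_convergence (bound := fun m : ℕ => 2 * ‖x‖ ^ (m + 1))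
    · refine ((summable_geometric_of_lt_one (norm_nonneg x) hx).mul_left (2 * ‖x‖)).congr
        fun m => ?_
      rw [pow_succ]; ring
    · intro m
      have hc : ((m : ℂ) + 1) ≠ 0 := Nat.cast_add_one_ne_zero m
      have h := (aux_tendsto ((m : ℂ) + 1) hc).const_mul (x ^ (m + 1) * ((m : ℂ) + 1)⁻¹)
      have h2 : Tendsto
          (fun ε : ℝ => (ε : ℂ) * (x ^ (m + 1) /
            (((m : ℂ) + 1) * (1 - Complex.exp (-(ε : ℂ) * ((m : ℂ) + 1))))))
          (𝓝[>] (0:ℝ)) (𝓝 (x ^ (m + 1) * ((m : ℂ) + 1)⁻¹ * ((m : ℂ) + 1)⁻¹)) :=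
        h.congr fun ε => by rw [div_eq_mul_inv, mul_inv]; ring
      convert h2 using 2
      rw [sq]; field_simp
    · filter_upwards [Ioc_mem_nhdsGT_of_mem (Set.mem_Ico.mpr ⟨le_refl (0:ℝ), one_pos⟩)]
        with ε hε m
      obtain ⟨hε0, hε1⟩ := hε
      set n : ℝ := (m : ℝ) + 1 with hn
      have hn1 : 1 ≤ n := by have : (0:ℝ) ≤ (m:ℝ) := Nat.cast_nonneg m; simp [hn]
      have hn0 : 0 < n := by linarith
      have ht : 0 < ε * n := mul_pos hε0 hn0
      set e : ℝ := Real.exp (-(ε * n)) with he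
      have hexp : Complex.exp (-(ε : ℂ) * ((m : ℂ) + 1)) = ((e : ℝ) : ℂ) := by
        rw [he, Complex.ofReal_exp]
        congr 1
        push_cast [hn]
        ring
      have hb : ε * n / (1 + ε * n) ≤ 1 - e := aux_exp (ε * n) ht
      have hden : 0 < 1 - e := lt_of_lt_of_le (by positivity) hb
      have hcast : ((m : ℂ) + 1) = ((n : ℝ) : ℂ) := by push_cast [hn]; ring
      have hnorm : ‖(ε : ℂ) * (x ^ (m + 1) /
            (((m : ℂ) + 1) * (1 - Complex.exp (-(ε : ℂ) * ((m : ℂ) + 1)))))‖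
          = ε * ‖x‖ ^ (m + 1) / (n * (1 - e)) := by
        rw [hexp, hcast, ← Complex.ofReal_one, ← Complex.ofReal_sub, ← Complex.ofReal_mul,
          norm_mul, norm_div, norm_pow, Complex.norm_real, Complex.norm_real,
          Real.norm_eq_abs, Real.norm_eq_abs, abs_of_pos hε0,
          abs_of_pos (mul_pos hn0 hden)]
        ring
      rw [hnorm]
      have hX : (0:ℝ) ≤ ‖x‖ ^ (m + 1) := by positivity
      have e2 : ε ≤ 2 * n * (1 - e) := by
        calc ε ≤ 2 * n * (ε * n / (1 + ε * n)) := by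
              rw [mul_div_assoc', le_div_iff₀ (by positivity)]
              nlinarith
          _ ≤ 2 * n * (1 - e) := by
              apply mul_le_mul_of_nonneg_left hb (by positivity)
      rw [div_le_iff₀ (by positivity)]
      calc ε * ‖x‖ ^ (m + 1) ≤ 2 * n * (1 - e) * ‖x‖ ^ (m + 1) :=
            mul_le_mul_of_nonneg_right e2 hX
        _ = 2 * ‖x‖ ^ (m + 1) * (n * (1 - e)) := by ring
  refine key.congr fun ε => ?_
  rw [tsum_mul_left]
end

section
/- Li₂(φ^{-2}) = π²/15 - (log φ)², where φ = (1+√5)/2 is the golden ratio and Li₂(x) = ∑_{m ≥ 1} x^m/m² is the dilogarithm. -/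
open Real

open Real Filter Set Topology

noncomputable def Li2 (x : ℝ) : ℝ := ∑' n : ℕ, x ^ (n + 1) / ((n : ℝ) + 1) ^ 2

lemma summable_inv_sq : Summable (fun n : ℕ => 1 / ((n : ℝ) + 1) ^ 2) := by
  have h := (Real.summable_one_div_nat_pow (p := 2)).mpr one_lt_two
  have h2 := (summable_nat_add_iff 1).mpr h
  refine h2.congr fun n => ?_
  push_cast
  ring

lemma li2_hasSum {x : ℝ} (hx : |x| ≤ 1) :
    HasSum (fun n : ℕ => x ^ (n + 1) / ((n : ℝ) + 1) ^ 2) (Li2 x) := by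
  refine (Summable.hasSum ?_)
  refine Summable.of_norm_bounded summable_inv_sq fun n => ?_
  rw [norm_div, norm_pow, Real.norm_eq_abs, Real.norm_eq_abs]
  have h1 : (0:ℝ) < (n:ℝ) + 1 := by positivity
  rw [abs_of_pos (by positivity : (0:ℝ) < ((n:ℝ)+1)^2)]
  gcongr
  exact pow_le_one₀ (abs_nonneg x) hx

lemma li2_hasDerivAt {x : ℝ} (hx : |x| < 1) :
    HasDerivAt Li2 (∑' n : ℕ, x ^ n / ((n : ℝ) + 1)) x := by
  set r : ℝ := (1 + |x|) / 2 with hr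
  have hr0 : 0 ≤ r := by positivity
  have hr1 : r < 1 := by rw [hr]; linarith
  have hxr : |x| < r := by rw [hr]; linarith [abs_nonneg x]
  have key : ∀ y ∈ Ioo (-r) r,
      HasDerivAt Li2 (∑' n : ℕ, y ^ n / ((n : ℝ) + 1)) y := by
    intro y hy
    refine hasDerivAt_tsum_of_isPreconnected
      (u := fun n : ℕ => r ^ n)
      (g := fun n y => y ^ (n + 1) / ((n : ℝ) + 1) ^ 2)
      (g' := fun n y => y ^ n / ((n : ℝ) + 1))
      (summable_geometric_of_lt_one hr0 hr1) isOpen_Ioo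
      (isPreconnected_Ioo) (fun n z hz => ?_) (fun n z hz => ?_)
      (y₀ := 0) ?_ ?_ hy
    · have h1 : ((n : ℝ) + 1) ≠ 0 := by positivity
      have := (hasDerivAt_pow (n + 1) z).div_const (((n : ℝ) + 1) ^ 2)
      refine this.congr_deriv ?_
      push_cast
      field_simp
    · have hz1 : |z| ≤ r := by
        rw [abs_le]; exact ⟨hz.1.le, hz.2.le⟩
      have h1 : (1:ℝ) ≤ (n:ℝ) + 1 := by linarith [Nat.cast_nonneg (α := ℝ) n]
      rw [Real.norm_eq_abs, abs_div, abs_pow, abs_of_pos (by positivity : (0:ℝ) < (n:ℝ)+1)]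
      calc |z| ^ n / ((n:ℝ) + 1) ≤ r ^ n / 1 := by gcongr
        _ = r ^ n := by ring
    · have hrpos : 0 < r := by rw [hr]; positivity
      exact ⟨by linarith, hrpos⟩
    · refine Summable.congr (summable_zero : Summable fun _ : ℕ => (0:ℝ)) fun n => ?_
      simp [zero_pow (Nat.succ_ne_zero n)]
  exact key x ⟨by cases abs_lt.mp hxr; linarith, (abs_lt.mp hxr).2⟩

lemma D_eq_log {x : ℝ} (hx : |x| < 1) (hx0 : x ≠ 0) :
    ∑' n : ℕ, x ^ n / ((n : ℝ) + 1) = -Real.log (1 - x) / x := by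
  have hlog := Real.hasSum_pow_div_log_of_abs_lt_one hx
  have hsum : Summable (fun n : ℕ => x ^ n / ((n : ℝ) + 1)) := by
    refine Summable.of_norm_bounded (summable_geometric_of_lt_one (abs_nonneg x) hx)
      fun n => ?_
    rw [Real.norm_eq_abs, abs_div, abs_pow, abs_of_pos (by positivity : (0:ℝ) < (n:ℝ)+1)]
    calc |x| ^ n / ((n:ℝ) + 1) ≤ |x| ^ n / 1 := by
          gcongr; linarith [Nat.cast_nonneg (α := ℝ) n]
      _ = |x| ^ n := by ring
  have h2 : HasSum (fun n : ℕ => x * (x ^ n / ((n : ℝ) + 1)))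
      (x * ∑' n : ℕ, x ^ n / ((n : ℝ) + 1)) := hsum.hasSum.mul_left x
  have h3 : (fun n : ℕ => x * (x ^ n / ((n : ℝ) + 1))) =
      fun n : ℕ => x ^ (n + 1) / ((n : ℝ) + 1) := by
    funext n; rw [pow_succ]; ring
  rw [h3] at h2
  have := h2.unique hlog
  field_simp
  linarith [this]

lemma D_zero : ∑' n : ℕ, (0:ℝ) ^ n / ((n : ℝ) + 1) = 1 := by
  rw [tsum_eq_single 0]
  · norm_num
  · intro n hn
    simp [zero_pow hn]

lemma li2_zero : Li2 0 = 0 := by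
  unfold Li2
  simp

lemma li2_hasDerivAt_log {x : ℝ} (hx : |x| < 1) (hx0 : x ≠ 0) :
    HasDerivAt Li2 (-Real.log (1 - x) / x) x := by
  have := li2_hasDerivAt hx
  rwa [D_eq_log hx hx0] at this

lemma const_helper {f : ℝ → ℝ} {a b : ℝ} (hab : a ≤ b)
    (h : ∀ x ∈ Icc a b, HasDerivAt f 0 x) : f b = f a :=
  constant_of_has_deriv_right_zero
    (fun x hx => (h x hx).continuousAt.continuousWithinAt)
    (fun x hx => ((h x ⟨hx.1, hx.2.le⟩).hasDerivWithinAt))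
    b (right_mem_Icc.2 hab)

lemma li2_one_sum : HasSum (fun n : ℕ => (1:ℝ) / ((n : ℝ) + 1) ^ 2) (π ^ 2 / 6) := by
  have h := hasSum_zeta_two
  have h2 : HasSum (fun n : ℕ => (1:ℝ) / (((n:ℕ) + 1 : ℕ) : ℝ) ^ 2) (π ^ 2 / 6) :=
    (hasSum_nat_add_iff (f := fun n : ℕ => (1:ℝ) / (n : ℝ) ^ 2) (g := π ^ 2 / 6) 1).mpr
      (by simpa using h)
  refine h2.congr_fun fun n => ?_
  push_cast
  norm_num

lemma li2_continuousOn : ContinuousOn Li2 (Icc (-1 : ℝ) 1) := by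
  set g : ℝ → ℝ := fun x => max (-1) (min x 1) with hg
  have hgc : Continuous g := by fun_prop
  have habs : ∀ x, |g x| ≤ 1 := by
    intro x
    rw [abs_le]
    constructor
    · exact le_max_left _ _
    · exact max_le (by norm_num) (min_le_right _ _)
  have hcont : Continuous (fun x => ∑' n : ℕ, (g x) ^ (n + 1) / ((n : ℝ) + 1) ^ 2) := by
    refine continuous_tsum (u := fun n : ℕ => 1 / ((n : ℝ) + 1) ^ 2)
      (fun n => by fun_prop) summable_inv_sq fun n x => ?_
    rw [Real.norm_eq_abs, abs_div, abs_pow, abs_of_pos (by positivity : (0:ℝ) < ((n:ℝ)+1)^2)]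
    have h1 : |g x| ^ (n + 1) ≤ 1 := pow_le_one₀ (abs_nonneg _) (habs x)
    have h2 : (0:ℝ) < ((n:ℝ) + 1) ^ 2 := by positivity
    calc |g x| ^ (n + 1) / ((n:ℝ) + 1) ^ 2 ≤ 1 / ((n:ℝ) + 1) ^ 2 := by gcongr
      _ = 1 / ((n:ℝ) + 1) ^ 2 := rfl
  have heq : ∀ x ∈ Icc (-1:ℝ) 1, Li2 x = ∑' n : ℕ, (g x) ^ (n + 1) / ((n : ℝ) + 1) ^ 2 := by
    intro x hx
    have : g x = x := by
      rw [hg]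
      simp only [min_eq_left hx.2, max_eq_right hx.1]
    rw [this]; rfl
  exact (hcont.continuousOn).congr heq

lemma li2_one : Li2 1 = π ^ 2 / 6 := by
  have := li2_one_sum
  simpa [Li2] using this.tsum_eq

lemma li2_tendsto_one : Tendsto Li2 (𝓝[<] (1:ℝ)) (𝓝 (π ^ 2 / 6)) := by
  have h := (li2_continuousOn 1 (by norm_num)).tendsto
  rw [li2_one] at h
  refine h.mono_left ?_
  rw [← nhdsWithin_Ioo_eq_nhdsLT (by norm_num : (-1:ℝ) < 1)]
  exact nhdsWithin_mono _ Ioo_subset_Icc_self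

lemma hasDerivAt_one_sub_log {x : ℝ} (hx : x ≠ 1) :
    HasDerivAt (fun t : ℝ => Real.log (1 - t)) (-(1 - x)⁻¹) x := by
  have h1 : HasDerivAt (fun t : ℝ => 1 - t) (-1 : ℝ) x := by
    simpa using (hasDerivAt_id x).const_sub 1
  have h2 := (Real.hasDerivAt_log (sub_ne_zero.mpr (Ne.symm hx))).comp x h1
  refine h2.congr_deriv ?_
  ring

lemma tendsto_log_mul_log : Tendsto (fun x : ℝ => Real.log x * Real.log (1 - x))
    (𝓝[<] (1:ℝ)) (𝓝 0) := by
  have hmap : Tendsto (fun x : ℝ => 1 - x) (𝓝[<] (1:ℝ)) (𝓝[>] (0:ℝ)) := by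
    rw [tendsto_nhdsWithin_iff]
    constructor
    · have h0 : Tendsto (fun x : ℝ => 1 - x) (𝓝 (1:ℝ)) (𝓝 (1 - 1 : ℝ)) :=
        Continuous.tendsto (by fun_prop) 1
      rw [sub_self] at h0
      exact h0.mono_left nhdsWithin_le_nhds
    · filter_upwards [self_mem_nhdsWithin] with x hx
      simp only [mem_Iio] at hx
      simp [mem_Ioi, sub_pos, hx]
  have key : Tendsto (fun t : ℝ => Real.log (1 - t) * Real.log t) (𝓝[>] (0:ℝ)) (𝓝 0) := by
    have hslope : Tendsto (fun t : ℝ => Real.log (1 - t) / t) (𝓝[>] (0:ℝ)) (𝓝 (-1)) := by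
      have hd : HasDerivAt (fun t : ℝ => Real.log (1 - t)) (-1 : ℝ) 0 := by
        simpa using hasDerivAt_one_sub_log (by norm_num : (0:ℝ) ≠ 1)
      have := hasDerivAt_iff_tendsto_slope.mp hd
      have h2 := this.mono_left (nhdsWithin_mono _ (fun t (ht : t ∈ Ioi 0) => ne_of_gt ht))
      refine h2.congr fun t => ?_
      simp [slope_def_field, div_eq_div_iff]
    have hxlog : Tendsto (fun t : ℝ => Real.log t * t) (𝓝[>] (0:ℝ)) (𝓝 0) := by
      have := tendsto_log_mul_rpow_nhdsGT_zero (r := 1) one_pos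
      refine this.congr fun t => ?_
      rw [Real.rpow_one]
    have hprod := hslope.mul hxlog
    rw [neg_one_mul, neg_zero] at hprod
    refine hprod.congr' ?_
    filter_upwards [self_mem_nhdsWithin] with t ht
    have ht0 : t ≠ 0 := ne_of_gt ht
    field_simp
  have hcomp := key.comp hmap
  refine hcomp.congr' ?_
  filter_upwards [self_mem_nhdsWithin] with x hx
  simp only [Function.comp_apply, sub_sub_cancel]

lemma li2_reflection {x : ℝ} (hx : x ∈ Ioo (0:ℝ) 1) :
    Li2 x + Li2 (1 - x) + Real.log x * Real.log (1 - x) = π ^ 2 / 6 := by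
  set F : ℝ → ℝ := fun y => Li2 y + Li2 (1 - y) + Real.log y * Real.log (1 - y) with hF
  have hderiv : ∀ y ∈ Ioo (0:ℝ) 1, HasDerivAt F 0 y := by
    intro y hy
    obtain ⟨hy0, hy1⟩ := hy
    have hy1' : (1:ℝ) - y ≠ 0 := by linarith
    have hy0' : y ≠ 0 := ne_of_gt hy0
    have habs : |y| < 1 := by rw [abs_of_pos hy0]; exact hy1
    have habs' : |1 - y| < 1 := by rw [abs_of_pos (by linarith)]; linarith
    have h1 : HasDerivAt Li2 (-Real.log (1 - y) / y) y := li2_hasDerivAt_log habs hy0'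
    have hinner : HasDerivAt (fun z : ℝ => 1 - z) (-1 : ℝ) y := by
      simpa using (hasDerivAt_id y).const_sub 1
    have h2 : HasDerivAt (fun z : ℝ => Li2 (1 - z))
        (-Real.log (1 - (1 - y)) / (1 - y) * (-1)) y :=
      (li2_hasDerivAt_log habs' hy1').comp y hinner
    have h3 : HasDerivAt (fun z : ℝ => Real.log z * Real.log (1 - z))
        (y⁻¹ * Real.log (1 - y) + Real.log y * (-(1 - y)⁻¹)) y :=
      (Real.hasDerivAt_log hy0').mul (hasDerivAt_one_sub_log (ne_of_lt hy1))
    have htot := (h1.add h2).add h3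
    refine htot.congr_deriv ?_
    rw [sub_sub_cancel]
    field_simp
    ring
  have hconst : ∀ y ∈ Ioo (0:ℝ) 1, F y = F x := by
    intro y hy
    rcases le_total x y with h | h
    · exact const_helper h (fun z hz => hderiv z ⟨lt_of_lt_of_le hx.1 hz.1, lt_of_le_of_lt hz.2 hy.2⟩)
    · exact (const_helper h (fun z hz => hderiv z ⟨lt_of_lt_of_le hy.1 hz.1, lt_of_le_of_lt hz.2 hx.2⟩)).symm
  -- limit of F at 1⁻ equals π²/6
  have hlim : Tendsto F (𝓝[<] (1:ℝ)) (𝓝 (π ^ 2 / 6)) := by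
    have l1 : Tendsto Li2 (𝓝[<] (1:ℝ)) (𝓝 (π ^ 2 / 6)) := li2_tendsto_one
    have l2 : Tendsto (fun y : ℝ => Li2 (1 - y)) (𝓝[<] (1:ℝ)) (𝓝 0) := by
      have hc : ContinuousAt Li2 0 := (li2_hasDerivAt (by norm_num)).continuousAt
      have hm : Tendsto (fun y : ℝ => 1 - y) (𝓝[<] (1:ℝ)) (𝓝 (0:ℝ)) := by
        have h0 : Tendsto (fun y : ℝ => 1 - y) (𝓝 (1:ℝ)) (𝓝 (1 - 1 : ℝ)) :=
          Continuous.tendsto (by fun_prop) 1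
        rw [sub_self] at h0
        exact h0.mono_left nhdsWithin_le_nhds
      have := hc.tendsto.comp hm
      rwa [li2_zero] at this
    have l3 := tendsto_log_mul_log
    have := (l1.add l2).add l3
    simpa using this
  have hlim2 : Tendsto F (𝓝[<] (1:ℝ)) (𝓝 (F x)) := by
    refine Tendsto.congr' ?_ tendsto_const_nhds
    filter_upwards [Ioo_mem_nhdsLT_of_mem (⟨hx.2, le_refl 1⟩ : (1:ℝ) ∈ Ioc x 1)] with y hy
    exact (hconst y ⟨lt_trans hx.1 hy.1, hy.2⟩).symm
  have := tendsto_nhds_unique hlim2 hlim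
  exact this

lemma li2_landen {c : ℝ} (hc0 : 0 ≤ c) (hc2 : c < 1/2) :
    Li2 c + Li2 (c / (c - 1)) + (Real.log (1 - c)) ^ 2 / 2 = 0 := by
  set G : ℝ → ℝ := fun x => Li2 x + Li2 (x / (x - 1)) + (Real.log (1 - x)) ^ 2 / 2 with hG
  have hderiv : ∀ x ∈ Icc (0:ℝ) c, HasDerivAt G 0 x := by
    intro x hx
    have hx0 : 0 ≤ x := hx.1
    have hx2 : x < 1/2 := lt_of_le_of_lt hx.2 hc2
    have hx1 : x ≠ 1 := by intro h; rw [h] at hx2; norm_num at hx2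
    have hxm1 : x - 1 ≠ 0 := by intro h; apply hx1; linarith [sub_eq_zero.mp h]
    have hxm1' : x - 1 < 0 := by linarith
    have habs : |x| < 1 := by rw [abs_of_nonneg hx0]; linarith
    have hrlt : -1 < x / (x - 1) := by
      rw [lt_div_iff_of_neg hxm1']
      linarith
    have hrle : x / (x - 1) ≤ 0 := div_nonpos_of_nonneg_of_nonpos hx0 (le_of_lt hxm1')
    have habsr : |x / (x - 1)| < 1 := by
      rw [abs_of_nonpos hrle]
      linarith
    have h1 : HasDerivAt Li2 (∑' n : ℕ, x ^ n / ((n : ℝ) + 1)) x := li2_hasDerivAt habs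
    have hinner : HasDerivAt (fun z : ℝ => z / (z - 1)) (-1 / (x - 1) ^ 2) x := by
      have := (hasDerivAt_id x).div ((hasDerivAt_id x).sub_const 1) hxm1
      refine this.congr_deriv ?_
      simp only [id]
      field_simp
      ring
    have h2 : HasDerivAt (fun z : ℝ => Li2 (z / (z - 1)))
        ((∑' n : ℕ, (x / (x - 1)) ^ n / ((n : ℝ) + 1)) * (-1 / (x - 1) ^ 2)) x :=
      by have := (li2_hasDerivAt habsr).comp x hinner; exact this
    have h3 : HasDerivAt (fun z : ℝ => (Real.log (1 - z)) ^ 2 / 2)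
        (Real.log (1 - x) * (-(1 - x)⁻¹)) x := by
      have := ((hasDerivAt_one_sub_log hx1).pow 2).div_const 2
      refine this.congr_deriv ?_
      ring
    have htot := (h1.add h2).add h3
    have hE : (∑' n : ℕ, x ^ n / ((n : ℝ) + 1)) +
        (∑' n : ℕ, (x / (x - 1)) ^ n / ((n : ℝ) + 1)) * (-1 / (x - 1) ^ 2) +
        Real.log (1 - x) * (-(1 - x)⁻¹) = 0 := by
      rcases eq_or_ne x 0 with rfl | hx0'
      · simp [D_zero]
      · have hr0 : x / (x - 1) ≠ 0 := div_ne_zero hx0' hxm1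
        have h1x : (1:ℝ) - x ≠ 0 := by intro h; apply hx1; linarith [sub_eq_zero.mp h]
        have hlog : Real.log (1 - x / (x - 1)) = -Real.log (1 - x) := by
          have heq : 1 - x / (x - 1) = (1 - x)⁻¹ := by
            field_simp
            ring
          rw [heq, Real.log_inv]
        rw [D_eq_log habs hx0', D_eq_log habsr hr0, hlog]
        field_simp
        ring
    rw [hE] at htot
    exact htot
  have := const_helper hc0 hderiv
  rw [hG] at this
  simp only at this
  rw [this]
  simp [li2_zero]

lemma li2_duplication {x : ℝ} (hx : |x| ≤ 1) :
    Li2 x + Li2 (-x) = Li2 (x ^ 2) / 2 := by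
  have hx' : |(-x)| ≤ 1 := by rwa [abs_neg]
  have hx2 : |x ^ 2| ≤ 1 := by
    rw [abs_pow]
    exact pow_le_one₀ (abs_nonneg x) hx
  have hA := li2_hasSum hx
  have hB := li2_hasSum hx'
  have hAB := hA.add hB
  have hsq := (li2_hasSum hx2).div_const 2
  set f : ℕ → ℝ := fun n => x ^ (n + 1) / ((n : ℝ) + 1) ^ 2 + (-x) ^ (n + 1) / ((n : ℝ) + 1) ^ 2
    with hf
  have hinj : Function.Injective (fun k : ℕ => 2 * k + 1) := by
    intro a b h
    simp only at h
    omega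
  have hzero : ∀ n : ℕ, n ∉ Set.range (fun k : ℕ => 2 * k + 1) → f n = 0 := by
    intro n hn
    have heven : Even n := by
      rcases Nat.even_or_odd n with h | h
      · exact h
      · exact absurd (by obtain ⟨k, hk⟩ := h; exact ⟨k, by simp only; omega⟩) hn
    have hodd : Odd (n + 1) := Even.add_one heven
    rw [hf]
    simp only
    rw [hodd.neg_pow]
    ring
  have hcomp : (f ∘ fun k : ℕ => 2 * k + 1) =
      fun k : ℕ => (x ^ 2) ^ (k + 1) / ((k : ℝ) + 1) ^ 2 / 2 := by
    funext k
    simp only [Function.comp_apply, hf]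
    have hodd : Even (2 * k + 1 + 1) := by exact ⟨k + 1, by ring⟩
    rw [hodd.neg_pow]
    have hpow : x ^ (2 * k + 1 + 1) = (x ^ 2) ^ (k + 1) := by
      rw [← pow_mul]
      ring_nf
    rw [hpow]
    push_cast
    field_simp
    ring
  have hsum2 : HasSum f (Li2 (x ^ 2) / 2) := by
    rw [← Function.Injective.hasSum_iff hinj hzero, hcomp]
    exact hsq
  exact hAB.unique hsum2

/-- `Li₂(φ⁻²) = π²/15 - (log φ)²`, where `φ = (1+√5)/2` is the golden ratio and
`Li₂(x) = ∑_{m≥1} x^m/m²`. -/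
theorem dilog_golden_ratio :
    ∑' m : ℕ, (((1 + Real.sqrt 5) / 2)⁻¹ ^ 2) ^ (m + 1) / ((m : ℝ) + 1) ^ 2 =
      Real.pi ^ 2 / 15 - (Real.log ((1 + Real.sqrt 5) / 2)) ^ 2 := by
  set s : ℝ := Real.sqrt 5 with hsdef
  have hs5 : s ^ 2 = 5 := Real.sq_sqrt (by norm_num)
  have hsnn : 0 ≤ s := Real.sqrt_nonneg 5
  have hs2 : 2 < s := by nlinarith
  have hs3 : s < 3 := by nlinarith
  set φ : ℝ := (1 + s) / 2 with hφdef
  have hφ0 : 0 < φ := by rw [hφdef]; linarith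
  set ψ : ℝ := φ⁻¹ with hψdef
  have hψval : ψ = (s - 1) / 2 := by
    rw [hψdef]
    refine (eq_inv_of_mul_eq_one_left ?_).symm
    rw [hφdef]
    nlinarith
  have hψsq : ψ ^ 2 = (3 - s) / 2 := by
    rw [hψval]
    linear_combination (1/4) * hs5
  have hψ0 : 0 < ψ := by rw [hψval]; linarith
  have hψ1 : ψ < 1 := by rw [hψval]; linarith
  have h1ψ : 1 - ψ = ψ ^ 2 := by rw [hψsq, hψval]; ring
  have h1ψ2 : 1 - ψ ^ 2 = ψ := by rw [hψsq, hψval]; ring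
  have hψψ : ψ ^ 2 / (ψ ^ 2 - 1) = -ψ := by
    have hne : ψ ^ 2 - 1 ≠ 0 := by rw [hψsq]; intro h; nlinarith [h]
    rw [div_eq_iff hne, hψsq, hψval]
    linear_combination (-1/4) * hs5
  have hψ2lt : ψ ^ 2 < 1/2 := by rw [hψsq]; linarith
  have hψ2pos : (0:ℝ) ≤ ψ ^ 2 := by positivity
  have hlogψ : Real.log ψ = -Real.log φ := by rw [hψdef, Real.log_inv]
  have hlogψ2 : Real.log (ψ ^ 2) = -(2 * Real.log φ) := by
    rw [Real.log_pow, hlogψ]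
    push_cast
    ring
  have hrefl := li2_reflection (x := ψ) ⟨hψ0, hψ1⟩
  rw [h1ψ, hlogψ, hlogψ2] at hrefl
  have hland := li2_landen hψ2pos hψ2lt
  rw [hψψ, h1ψ2, hlogψ] at hland
  have hdup := li2_duplication (x := ψ) (by rw [abs_of_pos hψ0]; linarith)
  have hgoal : Li2 (ψ ^ 2) = π ^ 2 / 15 - (Real.log φ) ^ 2 := by
    ring_nf at hrefl hland hdup ⊢
    linarith
  exact hgoal
end

section
/- As ε → 0⁺, the false theta function L(e^{-ε}) = ∑_{n ≥ 1} (-1)^{n-1} e^{-ε n(n+1)/2} satisfies L(e^{-ε}) = 1/2 + O(ε); in particular lim_{ε→0⁺} L(e^{-ε}) = 1/2. -/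
open Filter Topology Asymptotics

lemma ftPbound (v d : ℝ) (hv0 : 0 ≤ v) (hv1 : v ≤ 1) (hd0 : 0 ≤ d) (hd1 : d ≤ 1) :
    |1 - 4*(1-v) + 6*(1-v)^2*(1-d) - 4*(1-v)^3*(1-d)^3 + (1-v)^4*(1-d)^6|
      ≤ v^4 + 6*v^2*d + 784*d^2 := by
  have hdp : ∀ k : ℕ, 0 ≤ d^k ∧ d^k ≤ 1 := fun k => ⟨by positivity, pow_le_one₀ hd0 hd1⟩
  have hvp : ∀ k : ℕ, 0 ≤ v^k ∧ v^k ≤ 1 := fun k => ⟨by positivity, pow_le_one₀ hv0 hv1⟩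
  set A0 : ℝ := 3 - 16*d + 15*d^2 - 6*d^3 + d^4 with hA0def
  set A1 : ℝ := -24 + 68*d - 60*d^2 + 24*d^3 - 4*d^4 with hA1def
  set A2 : ℝ := 54 - 108*d + 90*d^2 - 36*d^3 + 6*d^4 with hA2def
  set A3 : ℝ := -48 + 76*d - 60*d^2 + 24*d^3 - 4*d^4 with hA3def
  set A4 : ℝ := 15 - 20*d + 15*d^2 - 6*d^3 + d^4 with hA4def
  set A : ℝ := A0 + v*A1 + v^2*A2 + v^3*A3 + v^4*A4 with hAdef
  have hb0 : |A0| ≤ 41 := by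
    rw [abs_le]; constructor <;>
      (rw [hA0def]; linarith [(hdp 2).1, (hdp 2).2, (hdp 3).1, (hdp 3).2, (hdp 4).1, (hdp 4).2, hd0, hd1])
  have hb1 : |A1| ≤ 180 := by
    rw [abs_le]; constructor <;>
      (rw [hA1def]; linarith [(hdp 2).1, (hdp 2).2, (hdp 3).1, (hdp 3).2, (hdp 4).1, (hdp 4).2, hd0, hd1])
  have hb2 : |A2| ≤ 294 := by
    rw [abs_le]; constructor <;>
      (rw [hA2def]; linarith [(hdp 2).1, (hdp 2).2, (hdp 3).1, (hdp 3).2, (hdp 4).1, (hdp 4).2, hd0, hd1])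
  have hb3 : |A3| ≤ 212 := by
    rw [abs_le]; constructor <;>
      (rw [hA3def]; linarith [(hdp 2).1, (hdp 2).2, (hdp 3).1, (hdp 3).2, (hdp 4).1, (hdp 4).2, hd0, hd1])
  have hb4 : |A4| ≤ 57 := by
    rw [abs_le]; constructor <;>
      (rw [hA4def]; linarith [(hdp 2).1, (hdp 2).2, (hdp 3).1, (hdp 3).2, (hdp 4).1, (hdp 4).2, hd0, hd1])
  have hmul : ∀ (k : ℕ) (B c : ℝ), |B| ≤ c → |v^k * B| ≤ c := by
    intro k B c hB
    rw [abs_mul, abs_pow, abs_of_nonneg hv0]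
    calc v^k * |B| ≤ 1 * c := by
          apply mul_le_mul (hvp k).2 hB (abs_nonneg B) zero_le_one
      _ = c := one_mul c
  have hAabs : |A| ≤ 784 := by
    rw [hAdef]
    calc |A0 + v*A1 + v^2*A2 + v^3*A3 + v^4*A4|
        ≤ |A0 + v*A1 + v^2*A2 + v^3*A3| + |v^4*A4| := abs_add_le _ _
      _ ≤ |A0 + v*A1 + v^2*A2| + |v^3*A3| + |v^4*A4| := by gcongr; exact abs_add_le _ _
      _ ≤ |A0 + v*A1| + |v^2*A2| + |v^3*A3| + |v^4*A4| := by gcongr; exact abs_add_le _ _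
      _ ≤ |A0| + |v^1*A1| + |v^2*A2| + |v^3*A3| + |v^4*A4| := by
          rw [pow_one]; gcongr; exact abs_add_le _ _
      _ ≤ 41 + 180 + 294 + 212 + 57 := by
          gcongr <;> first
            | exact hb0
            | exact hmul 1 _ _ hb1 | exact hmul 2 _ _ hb2
            | exact hmul 3 _ _ hb3 | exact hmul 4 _ _ hb4
      _ = 784 := by norm_num
  have hid : 1 - 4*(1-v) + 6*(1-v)^2*(1-d) - 4*(1-v)^3*(1-d)^3 + (1-v)^4*(1-d)^6
      = v^4 - 6*v^2*d*(1-v)^2 + d^2*A := by rw [hAdef, hA0def, hA1def, hA2def, hA3def, hA4def]; ring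
  have h1 : 0 ≤ 6*v^2*d*(1-v)^2 := by positivity
  have h2 : 6*v^2*d*(1-v)^2 ≤ 6*v^2*d := by
    have h3 : (1-v)^2 ≤ 1 := pow_le_one₀ (by linarith) (by linarith)
    nlinarith [mul_nonneg (mul_nonneg (sq_nonneg v) hd0) (sq_nonneg (1-v)), mul_nonneg (sq_nonneg v) hd0]
  have h3 : |d^2*A| ≤ 784*d^2 := by
    rw [abs_mul, abs_pow, abs_of_nonneg hd0]
    calc d^2 * |A| ≤ d^2 * 784 := by
          apply mul_le_mul_of_nonneg_left hAabs (by positivity)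
      _ = 784*d^2 := by ring
  have h4 : 0 ≤ v^4 := by positivity
  rw [hid, abs_le]
  obtain ⟨h5a, h5b⟩ := abs_le.mp h3
  constructor <;> linarith

set_option maxHeartbeats 2000000 in
lemma ftKey (ε : ℝ) (hε : 0 < ε) (hε1 : ε ≤ 1)
    (F : ℕ → ℝ) (hFdef : F = fun n : ℕ => (-1:ℝ)^n * Real.exp (-ε * (((n:ℝ)+1)*((n:ℝ)+2)/2))) :
    |(∑' n : ℕ, F n) - 1/2| ≤ 244 * ε := by
  set h : ℕ → ℝ := fun n => Real.exp (-ε * (((n:ℝ)+1)*((n:ℝ)+2)/2)) with hhdef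
  have hFh : ∀ n, F n = (-1:ℝ)^n * h n := by intro n; rw [hFdef]
  have hh0 : ∀ n, 0 ≤ h n := fun n => Real.exp_nonneg _
  have hq1 : Real.exp (-ε) < 1 := Real.exp_lt_one_iff.mpr (by linarith)
  have hhle : ∀ n : ℕ, h n ≤ Real.exp (-ε) ^ n * Real.exp (-ε) := by
    intro n
    have h1 : Real.exp (-ε) ^ n * Real.exp (-ε) = Real.exp (((n:ℝ)+1) * (-ε)) := by
      rw [← Real.exp_nat_mul, ← Real.exp_add]
      congr 1; ring
    rw [h1, hhdef]
    apply Real.exp_le_exp.mpr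
    have hn : (0:ℝ) ≤ (n:ℝ) := Nat.cast_nonneg n
    nlinarith [mul_nonneg (mul_nonneg hε.le hn) hn, mul_nonneg hε.le hn]
  have hFnorm : ∀ n, ‖F n‖ = h n := by
    intro n
    rw [hFh n, norm_mul, norm_pow, norm_neg, norm_one, one_pow, one_mul,
      Real.norm_eq_abs, abs_of_nonneg (hh0 n)]
  have hF : Summable F := by
    apply Summable.of_norm_bounded
      ((summable_geometric_of_lt_one (Real.exp_nonneg _) hq1).mul_right (Real.exp (-ε)))
    intro n; rw [hFnorm n]; exact hhle n
  have hFk : ∀ k : ℕ, Summable fun n => F (n+k) := fun k => (summable_nat_add_iff k).mpr hF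
  set S := ∑' n, F n with hSdef
  have hshift : ∀ k : ℕ, ∑' n, F (n+k) = S - ∑ i ∈ Finset.range k, F i := by
    intro k
    have := Summable.sum_add_tsum_nat_add (f := F) k hF
    rw [hSdef]; linarith
  set G : ℕ → ℝ := fun n => F n + 4*F (n+1) + 6*F (n+2) + 4*F (n+3) + F (n+4) with hGdef
  have hGsum : Summable G :=
    (((hF.add ((hFk 1).mul_left 4)).add ((hFk 2).mul_left 6)).add ((hFk 3).mul_left 4)).add (hFk 4)
  have htG : ∑' n, G n = 16*S - (15*h 0 - 11*h 1 + 5*h 2 - h 3) := by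
    rw [hGdef]
    rw [Summable.tsum_add (((hF.add ((hFk 1).mul_left 4)).add ((hFk 2).mul_left 6)).add ((hFk 3).mul_left 4)) (hFk 4),
        Summable.tsum_add ((hF.add ((hFk 1).mul_left 4)).add ((hFk 2).mul_left 6)) ((hFk 3).mul_left 4),
        Summable.tsum_add (hF.add ((hFk 1).mul_left 4)) ((hFk 2).mul_left 6),
        Summable.tsum_add hF ((hFk 1).mul_left 4),
        tsum_mul_left, tsum_mul_left, tsum_mul_left,
        hshift 1, hshift 2, hshift 3, hshift 4, ← hSdef]
    simp only [Finset.sum_range_succ, Finset.sum_range_zero, hFh, pow_zero, pow_one, pow_succ]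
    ring
  -- per-term bound
  have hGb : ∀ n : ℕ, |G n| ≤ 1904 * ε^2 * Real.exp (-(ε/2)) ^ (n+1) := by
    intro n
    set u := Real.exp (-(ε * ((n:ℝ)+2))) with hudef
    set q := Real.exp (-ε) with hqdef
    have hn0 : (0:ℝ) ≤ (n:ℝ) := Nat.cast_nonneg n
    have hu0 : 0 ≤ u := Real.exp_nonneg _
    have hu1 : u ≤ 1 := Real.exp_le_one_iff.mpr (by nlinarith)
    have hq0 : 0 ≤ q := Real.exp_nonneg _
    have hq1' : q ≤ 1 := Real.exp_le_one_iff.mpr (by linarith)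
    have hv : 1 - u ≤ ε * ((n:ℝ)+2) := by
      have := Real.add_one_le_exp (-(ε * ((n:ℝ)+2)))
      rw [← hudef] at this; linarith
    have hdq : 1 - q ≤ ε := by
      have := Real.add_one_le_exp (-ε)
      rw [← hqdef] at this; linarith
    set t := ε*((n:ℝ)+1)^2/4 with htdef
    have ht0 : 0 ≤ t := by rw [htdef]; positivity
    have hht : h n ≤ Real.exp (-t) * Real.exp (-(ε/2)) ^ (n+1) := by
      have h1 : Real.exp (-t) * Real.exp (-(ε/2)) ^ (n+1) = Real.exp (-t + ((n:ℝ)+1) * (-(ε/2))) := by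
        rw [← Real.exp_nat_mul, ← Real.exp_add]
        congr 2; push_cast; ring
      simp only [hhdef]
      rw [h1]
      apply Real.exp_le_exp.mpr
      rw [htdef]
      have hn1 : (0:ℝ) ≤ (n:ℝ)+1 := by linarith
      nlinarith [mul_nonneg hε.le (mul_nonneg hn1 hn1)]
    have hexp_t : t ≤ Real.exp t := by linarith [Real.add_one_le_exp t]
    have hexp_t2 : t^2 ≤ 4 * Real.exp t := by
      have h1 : Real.exp t = Real.exp (t/2)^2 := by
        rw [← Real.exp_nat_mul]; congr 1; push_cast; ring
      nlinarith [Real.add_one_le_exp (t/2), Real.exp_pos (t/2)]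
    have hte : Real.exp (-t) * Real.exp t = 1 := by rw [← Real.exp_add]; simp
    have het0 : 0 ≤ Real.exp (-t) := Real.exp_nonneg _
    have het1 : Real.exp (-t) ≤ 1 := Real.exp_le_one_iff.mpr (by linarith)
    have hb1 : t * Real.exp (-t) ≤ 1 := by
      calc t * Real.exp (-t) ≤ Real.exp t * Real.exp (-t) :=
            mul_le_mul_of_nonneg_right hexp_t het0
        _ = 1 := by linear_combination hte
    have hb2 : t^2 * Real.exp (-t) ≤ 4 := by
      calc t^2 * Real.exp (-t) ≤ (4*Real.exp t) * Real.exp (-t) :=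
            mul_le_mul_of_nonneg_right hexp_t2 het0
        _ = 4 := by linear_combination 4*hte
    set X := ε * ((n:ℝ)+2) with hXdef
    have hX0 : 0 ≤ X := by rw [hXdef]; positivity
    have hX2 : X^2 ≤ 16*t*ε := by
      have h2 : ((n:ℝ)+2)^2 ≤ 4*((n:ℝ)+1)^2 := by nlinarith
      calc X^2 = ε^2 * (((n:ℝ)+2)^2) := by rw [hXdef]; ring
        _ ≤ ε^2 * (4*((n:ℝ)+1)^2) := mul_le_mul_of_nonneg_left h2 (sq_nonneg ε)
        _ = 16*(ε*((n:ℝ)+1)^2/4)*ε := by ring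
        _ = 16*t*ε := by rw [htdef]
    have hX4 : X^4 ≤ 256*t^2*ε^2 := by
      have h4 : X^4 = (X^2)^2 := by ring
      rw [h4]
      calc (X^2)^2 ≤ (16*t*ε)^2 := by
            apply pow_le_pow_left₀ (by positivity) hX2
        _ = 256*t^2*ε^2 := by ring
    have hc1 : Real.exp (-t) * X^4 ≤ 1024 * ε^2 := by
      calc Real.exp (-t) * X^4 ≤ Real.exp (-t) * (256*t^2*ε^2) :=
            mul_le_mul_of_nonneg_left hX4 het0
        _ = 256*(t^2*Real.exp (-t))*ε^2 := by ring
        _ ≤ 256*4*ε^2 := by gcongr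
        _ = 1024*ε^2 := by ring
    have hc2 : Real.exp (-t) * X^2 ≤ 16*ε := by
      calc Real.exp (-t) * X^2 ≤ Real.exp (-t) * (16*t*ε) :=
            mul_le_mul_of_nonneg_left hX2 het0
        _ = 16*(t*Real.exp (-t))*ε := by ring
        _ ≤ 16*1*ε := by gcongr
        _ = 16*ε := by ring
    have hc3 : 784*ε^2*Real.exp (-t) ≤ 784*ε^2 := by
      calc 784*ε^2*Real.exp (-t) ≤ 784*ε^2*1 :=
            mul_le_mul_of_nonneg_left het1 (by positivity)
        _ = 784*ε^2 := by ring
    -- expansion of shifted terms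
    have hexpand : ∀ (j m : ℕ), h n * u^j * q^m
        = Real.exp (-ε * (((n:ℝ)+1)*((n:ℝ)+2)/2) + (j:ℝ) * (-(ε * ((n:ℝ)+2))) + (m:ℝ)*(-ε)) := by
      intro j m
      simp only [hhdef, hudef, hqdef]
      rw [← Real.exp_nat_mul, ← Real.exp_nat_mul, ← Real.exp_add, ← Real.exp_add]
    have e1 : h (n+1) = h n * u^1 * q^0 := by
      rw [hexpand 1 0]; simp only [hhdef, Real.exp_eq_exp]; push_cast; ring
    have e2 : h (n+2) = h n * u^2 * q^1 := by
      rw [hexpand 2 1]; simp only [hhdef, Real.exp_eq_exp]; push_cast; ring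
    have e3 : h (n+3) = h n * u^3 * q^3 := by
      rw [hexpand 3 3]; simp only [hhdef, Real.exp_eq_exp]; push_cast; ring
    have e4 : h (n+4) = h n * u^4 * q^6 := by
      rw [hexpand 4 6]; simp only [hhdef, Real.exp_eq_exp]; push_cast; ring
    have hGeq : G n = (-1:ℝ)^n * (h n * (1 - 4*u + 6*u^2*q - 4*u^3*q^3 + u^4*q^6)) := by
      rw [hGdef]
      simp only [hFh, e1, e2, e3, e4, pow_succ]
      ring
    have hGabs : |G n| = h n * |1 - 4*u + 6*u^2*q - 4*u^3*q^3 + u^4*q^6| := by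
      rw [hGeq, abs_mul, abs_mul, abs_pow, abs_neg, abs_one, one_pow, one_mul,
        abs_of_nonneg (hh0 n)]
    have hP := ftPbound (1-u) (1-q) (by linarith) (by linarith) (by linarith) (by linarith)
    simp only [sub_sub_cancel] at hP
    have hPb : |1 - 4*u + 6*u^2*q - 4*u^3*q^3 + u^4*q^6| ≤ X^4 + 6*X^2*ε + 784*ε^2 := by
      have hv0' : (0:ℝ) ≤ 1-u := by linarith
      have hd0' : (0:ℝ) ≤ 1-q := by linarith
      have t1 : (1-u)^4 ≤ X^4 := pow_le_pow_left₀ hv0' hv 4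
      have t2 : (1-u)^2 ≤ X^2 := pow_le_pow_left₀ hv0' hv 2
      have t3 : (1-q)^2 ≤ ε^2 := pow_le_pow_left₀ hd0' hdq 2
      have t4 : (1-u)^2*(1-q) ≤ X^2*ε :=
        mul_le_mul t2 hdq hd0' (by positivity)
      refine hP.trans ?_
      linarith
    clear_value u q t X
    clear hP hGeq hexpand e1 e2 e3 e4 htG hGsum hshift hFk hF hFnorm hFh hhle hq1
    rw [hGabs]
    calc h n * |1 - 4*u + 6*u^2*q - 4*u^3*q^3 + u^4*q^6|
        ≤ (Real.exp (-t) * Real.exp (-(ε/2)) ^ (n+1)) * (X^4 + 6*X^2*ε + 784*ε^2) :=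
          mul_le_mul hht hPb (abs_nonneg _) (by positivity)
      _ = (Real.exp (-t) * X^4 + 6*ε*(Real.exp (-t) * X^2) + 784*ε^2*Real.exp (-t))
            * Real.exp (-(ε/2)) ^ (n+1) := by ring
      _ ≤ (1024*ε^2 + 6*ε*(16*ε) + 784*ε^2) * Real.exp (-(ε/2)) ^ (n+1) := by
          apply mul_le_mul_of_nonneg_right _ (by positivity)
          have h6 : 6*ε*(Real.exp (-t) * X^2) ≤ 6*ε*(16*ε) :=
            mul_le_mul_of_nonneg_left hc2 (by positivity)
          linarith
      _ = 1904 * ε^2 * Real.exp (-(ε/2)) ^ (n+1) := by ring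
  -- geometric sum facts
  have hr0 : 0 ≤ Real.exp (-(ε/2)) := Real.exp_nonneg _
  have hr1 : Real.exp (-(ε/2)) < 1 := Real.exp_lt_one_iff.mpr (by linarith)
  have hrsum : Summable (fun n : ℕ => Real.exp (-(ε/2)) ^ (n+1)) := by
    simpa [pow_succ] using (summable_geometric_of_lt_one hr0 hr1).mul_right (Real.exp (-(ε/2)))
  have hgeo : ∑' n : ℕ, Real.exp (-(ε/2)) ^ (n+1) ≤ 2/ε := by
    have hsum : ∑' n : ℕ, Real.exp (-(ε/2)) ^ (n+1)
        = (1 - Real.exp (-(ε/2)))⁻¹ * Real.exp (-(ε/2)) := by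
      calc ∑' n : ℕ, Real.exp (-(ε/2)) ^ (n+1)
          = ∑' n : ℕ, Real.exp (-(ε/2)) ^ n * Real.exp (-(ε/2)) := by
            simp [pow_succ]
        _ = (∑' n : ℕ, Real.exp (-(ε/2)) ^ n) * Real.exp (-(ε/2)) := tsum_mul_right
        _ = (1 - Real.exp (-(ε/2)))⁻¹ * Real.exp (-(ε/2)) := by
            rw [tsum_geometric_of_lt_one hr0 hr1]
    rw [hsum]
    set r := Real.exp (-(ε/2)) with hrdef
    have h1 : 1 = r * Real.exp (ε/2) := by rw [hrdef, ← Real.exp_add]; simp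
    have h2 : 1 + ε/2 ≤ Real.exp (ε/2) := by linarith [Real.add_one_le_exp (ε/2)]
    have h3 : r * (ε/2) ≤ 1 - r := by nlinarith
    have h4 : 0 < 1 - r := by linarith
    rw [le_div_iff₀ hε, inv_mul_eq_div, div_mul_eq_mul_div, div_le_iff₀ h4]
    linarith
  have hGabsSum : Summable (fun n => |G n|) := hGsum.abs
  have hbsum : Summable (fun n : ℕ => 1904*ε^2 * Real.exp (-(ε/2)) ^ (n+1)) := hrsum.mul_left _
  have hGtotal : |∑' n, G n| ≤ 3808 * ε := by
    calc |∑' n, G n| ≤ ∑' n, |G n| := by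
          simpa [Real.norm_eq_abs] using
            norm_tsum_le_tsum_norm (f := G) (by simpa [Real.norm_eq_abs] using hGabsSum)
      _ ≤ ∑' n, 1904*ε^2 * Real.exp (-(ε/2)) ^ (n+1) := Summable.tsum_le_tsum hGb hGabsSum hbsum
      _ = 1904*ε^2 * ∑' n, Real.exp (-(ε/2)) ^ (n+1) := tsum_mul_left
      _ ≤ 1904*ε^2 * (2/ε) := mul_le_mul_of_nonneg_left hgeo (by positivity)
      _ = 3808 * ε := by field_simp; ring
  -- head terms
  have hhead : |15*h 0 - 11*h 1 + 5*h 2 - h 3 - 8| ≤ 88*ε := by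
    have hkb : ∀ k : ℕ, 1 - ε*(((k:ℝ)+1)*((k:ℝ)+2)/2) ≤ h k ∧ h k ≤ 1 := by
      intro k
      have hck : (0:ℝ) ≤ (k:ℝ) := Nat.cast_nonneg k
      constructor
      · have := Real.add_one_le_exp (-(ε*(((k:ℝ)+1)*((k:ℝ)+2)/2)))
        simp only [hhdef]
        rw [show -ε * (((k:ℝ)+1)*((k:ℝ)+2)/2) = -(ε*(((k:ℝ)+1)*((k:ℝ)+2)/2)) by ring]
        linarith
      · simp only [hhdef]
        apply Real.exp_le_one_iff.mpr
        have hnn : (0:ℝ) ≤ ε*(((k:ℝ)+1)*((k:ℝ)+2)/2) := by positivity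
        linarith
    have h0b := hkb 0
    have h1b := hkb 1
    have h2b := hkb 2
    have h3b := hkb 3
    norm_num at h0b h1b h2b h3b
    obtain ⟨h0l, h0r⟩ := h0b
    obtain ⟨h1l, h1r⟩ := h1b
    obtain ⟨h2l, h2r⟩ := h2b
    obtain ⟨h3l, h3r⟩ := h3b
    rw [abs_le]
    constructor
    · linarith
    · linarith
  -- final assembly
  have hfinal : 16*S - 8 = (∑' n, G n) + (15*h 0 - 11*h 1 + 5*h 2 - h 3 - 8) := by
    rw [htG]; ring
  have hS8 : |16*S - 8| ≤ 3896*ε := by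
    rw [hfinal]
    calc |(∑' n, G n) + (15*h 0 - 11*h 1 + 5*h 2 - h 3 - 8)|
        ≤ |∑' n, G n| + |15*h 0 - 11*h 1 + 5*h 2 - h 3 - 8| := abs_add_le _ _
      _ ≤ 3808*ε + 88*ε := add_le_add hGtotal hhead
      _ = 3896*ε := by ring
  have h16 : S - 1/2 = (16*S - 8)/16 := by ring
  calc |S - 1/2| = |16*S - 8|/16 := by rw [h16, abs_div]; norm_num
    _ ≤ 3896*ε/16 := by linarith
    _ ≤ 244*ε := by linarith

/-- As `ε → 0⁺`, the false theta function
`L(e^{-ε}) = ∑_{n≥1} (-1)^{n-1} e^{-εn(n+1)/2}` satisfies `L(e^{-ε}) = 1/2 + O(ε)`;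
in particular its limit is `1/2`. -/
theorem false_theta_asymptotic :
    (fun ε : ℝ =>
        (∑' n : ℕ, (-1 : ℝ) ^ n * Real.exp (-ε * (((n : ℝ) + 1) * ((n : ℝ) + 2) / 2))) - 1 / 2)
      =O[nhdsWithin 0 (Set.Ioi 0)] (fun ε : ℝ => ε) ∧
    Tendsto
      (fun ε : ℝ =>
        ∑' n : ℕ, (-1 : ℝ) ^ n * Real.exp (-ε * (((n : ℝ) + 1) * ((n : ℝ) + 2) / 2)))
      (nhdsWithin 0 (Set.Ioi 0)) (nhds (1 / 2)) := by
  have hO : (fun ε : ℝ =>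
      (∑' n : ℕ, (-1 : ℝ) ^ n * Real.exp (-ε * (((n : ℝ) + 1) * ((n : ℝ) + 2) / 2))) - 1 / 2)
      =O[nhdsWithin 0 (Set.Ioi 0)] (fun ε : ℝ => ε) := by
    rw [Asymptotics.isBigO_iff]
    refine ⟨244, ?_⟩
    filter_upwards [Ioc_mem_nhdsGT_of_mem (Set.left_mem_Ico.mpr zero_lt_one)] with ε hε
    rw [Real.norm_eq_abs, Real.norm_eq_abs, abs_of_pos hε.1]
    exact ftKey ε hε.1 hε.2 _ rfl
  refine ⟨hO, ?_⟩
  have h0 : Tendsto (fun ε : ℝ => ε) (nhdsWithin (0:ℝ) (Set.Ioi 0)) (nhds 0) :=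
    (tendsto_id (x := nhdsWithin (0:ℝ) (Set.Ioi 0))).mono_right nhdsWithin_le_nhds
  have h1 := hO.trans_tendsto h0
  have h2 : Tendsto (fun ε : ℝ =>
      ((∑' n : ℕ, (-1 : ℝ) ^ n * Real.exp (-ε * (((n : ℝ) + 1) * ((n : ℝ) + 2) / 2))) - 1 / 2)
        + 1 / 2)
      (nhdsWithin 0 (Set.Ioi 0)) (nhds (0 + 1 / 2)) := h1.add tendsto_const_nhds
  simpa using h2
end
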